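/- arXiv:math/0512623 — 2 statements merged into one kernel-verified Lean document; each statement's English description precedes it below -/
import Mathlib

section
/- For every integer t ≥ 2, the following formal power series identity holds: Σ_{n∈ℤ} (-1)^n q^{(2t-1)n(3(2t-1)n-1)/2} + Σ_{r=1}^{t-1} (-1)^r Σ_{n∈ℤ} (-1)^n q^{r(3r-1)/2 + (6r-1)(2t-1)n/2 + 3(2t-1)^2 n^2/2} + Σ_{r=1}^{t-1} (-1)^r Σ_{n∈ℤ} (-1)^n q^{r(3r+1)/2 + (6r+1)(2t-1)n/2 + 3(2t-1)^2 n^2/2} = Π_{n≥1} (1 - q^n). -/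
open PowerSeries

/-- The infinite product `∏_{n ≥ 1} f n` of power series, where the `n`-th factor
is `1 + O(q^n)`: its `N`-th coefficient is the `N`-th coefficient of any
sufficiently long partial product. -/
noncomputable def seriesProd (f : ℕ → PowerSeries ℤ) : PowerSeries ℤ :=
  PowerSeries.mk fun N => coeff N (∏ n ∈ Finset.range (N + 1), f n)

/-- A formal sum `∑_{n ∈ ℤ} c n * q^(e n)`, where for each `N` only finitely many
`n ∈ ℤ` satisfy `e n = N`: its `N`-th coefficient is `∑_{n : e n = N} c n`. -/
noncomputable def seriesSum (c : ℤ → ℤ) (e : ℤ → ℕ) : PowerSeries ℤ :=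
  PowerSeries.mk fun N => ∑' n : ℤ, if e n = N then c n else 0


open Finset

section Franklin
open scoped Classical

/-- exceptional (pentagonal) partitions -/
def Exc (S : Finset ℕ) : Prop :=
  ∃ k : ℕ, 1 ≤ k ∧ (S = Finset.Icc k (2 * k - 1) ∨ S = Finset.Icc (k + 1) (2 * k))

def stairSet (A : Finset ℕ) (h : A.Nonempty) : Finset ℕ :=
  A.filter (fun x => Finset.Icc x (A.max' h) ⊆ A)

lemma max'_mem_stairSet (A : Finset ℕ) (h : A.Nonempty) : A.max' h ∈ stairSet A h := by
  refine Finset.mem_filter.2 ⟨A.max'_mem h, ?_⟩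
  rw [Finset.Icc_self, Finset.singleton_subset_iff]
  exact A.max'_mem h

noncomputable def stairBase (A : Finset ℕ) (h : A.Nonempty) : ℕ :=
  (stairSet A h).min' ⟨_, max'_mem_stairSet A h⟩

lemma stairBase_mem (A : Finset ℕ) (h : A.Nonempty) : stairBase A h ∈ A :=
  (Finset.mem_filter.1 ((stairSet A h).min'_mem _)).1

lemma stairBase_subset (A : Finset ℕ) (h : A.Nonempty) :
    Finset.Icc (stairBase A h) (A.max' h) ⊆ A :=
  (Finset.mem_filter.1 ((stairSet A h).min'_mem _)).2

lemma stairBase_le_of_mem (A : Finset ℕ) (h : A.Nonempty) {x : ℕ}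
    (hx : x ∈ A) (hsub : Finset.Icc x (A.max' h) ⊆ A) : stairBase A h ≤ x :=
  Finset.min'_le _ _ (Finset.mem_filter.2 ⟨hx, hsub⟩)

lemma stairBase_le_max' (A : Finset ℕ) (h : A.Nonempty) : stairBase A h ≤ A.max' h :=
  A.le_max' _ (stairBase_mem A h)

lemma min'_le_stairBase (A : Finset ℕ) (h : A.Nonempty) : A.min' h ≤ stairBase A h :=
  A.min'_le _ (stairBase_mem A h)

lemma pred_stairBase_not_mem (A : Finset ℕ) (h : A.Nonempty) (h0 : 0 ∉ A) :
    stairBase A h - 1 ∉ A := by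
  intro hc
  have hb1 : 1 ≤ stairBase A h := by
    rcases Nat.eq_zero_or_pos (stairBase A h) with h' | h'
    · exact absurd (h' ▸ stairBase_mem A h) h0
    · exact h'
  have hble : stairBase A h - 1 < stairBase A h := by omega
  have : stairBase A h ≤ stairBase A h - 1 := by
    apply stairBase_le_of_mem A h hc
    intro x hx
    rw [Finset.mem_Icc] at hx
    rcases Nat.eq_or_lt_of_le hx.1 with h'' | h''
    · rwa [← h'']
    · exact stairBase_subset A h (Finset.mem_Icc.2 ⟨by omega, hx.2⟩)
  omega

noncomputable def frank (A : Finset ℕ) : Finset ℕ :=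
  if h : A.Nonempty then
    if A.min' h + stairBase A h ≤ A.max' h + 1 then
      ((A.erase (A.min' h)).filter (fun x => x ≤ A.max' h - A.min' h))
        ∪ Finset.Icc (A.max' h - A.min' h + 2) (A.max' h + 1)
    else
      (A.filter (fun x => x < stairBase A h))
        ∪ Finset.Icc (stairBase A h - 1) (A.max' h - 1) ∪ {A.max' h + 1 - stairBase A h}
  else ∅

lemma frank_of_le {A : Finset ℕ} (h : A.Nonempty)
    (hc : A.min' h + stairBase A h ≤ A.max' h + 1) :
    frank A = ((A.erase (A.min' h)).filter (fun x => x ≤ A.max' h - A.min' h))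
        ∪ Finset.Icc (A.max' h - A.min' h + 2) (A.max' h + 1) := by
  rw [frank, dif_pos h, if_pos hc]

lemma frank_of_gt {A : Finset ℕ} (h : A.Nonempty)
    (hc : ¬ (A.min' h + stairBase A h ≤ A.max' h + 1)) :
    frank A = (A.filter (fun x => x < stairBase A h))
        ∪ Finset.Icc (stairBase A h - 1) (A.max' h - 1) ∪ {A.max' h + 1 - stairBase A h} := by
  rw [frank, dif_pos h, if_neg hc]

/-- splitting a finset at the top staircase -/
lemma split_at (A : Finset ℕ) (h : A.Nonempty) {c : ℕ}
    (hc : Finset.Icc c (A.max' h) ⊆ A) :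
    A = A.filter (fun x => x < c) ∪ Finset.Icc c (A.max' h) := by
  ext x
  constructor
  · intro hx
    rcases lt_or_ge x c with h' | h'
    · exact Finset.mem_union_left _ (Finset.mem_filter.2 ⟨hx, h'⟩)
    · exact Finset.mem_union_right _ (Finset.mem_Icc.2 ⟨h', A.le_max' _ hx⟩)
  · intro hx
    rcases Finset.mem_union.1 hx with h' | h'
    · exact (Finset.mem_filter.1 h').1
    · exact hc h'

lemma interval_min' {c d : ℕ} (h : c ≤ d) :
    (Finset.Icc c d).min' (Finset.nonempty_Icc.2 h) = c := by
  apply le_antisymm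
  · exact Finset.min'_le _ _ (Finset.mem_Icc.2 ⟨le_refl c, h⟩)
  · apply Finset.le_min'
    intro y hy
    exact (Finset.mem_Icc.1 hy).1

lemma interval_max' {c d : ℕ} (h : c ≤ d) :
    (Finset.Icc c d).max' (Finset.nonempty_Icc.2 h) = d := by
  apply le_antisymm
  · apply Finset.max'_le
    intro y hy
    exact (Finset.mem_Icc.1 hy).2
  · exact Finset.le_max' _ _ (Finset.mem_Icc.2 ⟨h, le_refl d⟩)

lemma interval_stairBase {c d : ℕ} (h : c ≤ d) :
    stairBase (Finset.Icc c d) (Finset.nonempty_Icc.2 h) = c := by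
  apply le_antisymm
  · apply stairBase_le_of_mem
    · exact Finset.mem_Icc.2 ⟨le_refl c, h⟩
    · rw [interval_max' h]
  · have := stairBase_mem (Finset.Icc c d) (Finset.nonempty_Icc.2 h)
    exact (Finset.mem_Icc.1 this).1

/-- the sum of an interval shifted up by one -/
lemma sum_Icc_shift (c d : ℕ) (h : c ≤ d) :
    (Finset.Icc (c + 1) (d + 1)).sum id = (Finset.Icc c d).sum id + (d + 1 - c) := by
  have himg : Finset.Icc (c + 1) (d + 1) = (Finset.Icc c d).image (· + 1) := by
    rw [Finset.image_add_right_Icc]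
  rw [himg, Finset.sum_image (by intro x _ y _ hxy; simp only at hxy; omega)]
  simp only [id]
  rw [Finset.sum_add_distrib, Finset.sum_const, Nat.card_Icc, smul_eq_mul, mul_one]

lemma stairBase_congr {S T : Finset ℕ} (hST : S = T) (hS : S.Nonempty) (hT : T.Nonempty) :
    stairBase S hS = stairBase T hT := by subst hST; rfl

lemma max'_congr {S T : Finset ℕ} (hST : S = T) (hS : S.Nonempty) (hT : T.Nonempty) :
    S.max' hS = T.max' hT := by subst hST; rfl

lemma min'_congr {S T : Finset ℕ} (hST : S = T) (hS : S.Nonempty) (hT : T.Nonempty) :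
    S.min' hS = T.min' hT := by subst hST; rfl

end Franklin

section Moves
open scoped Classical

variable {A : Finset ℕ}

lemma move1_spec (h : A.Nonempty) (h0 : 0 ∉ A) (hexc : ¬ Exc A)
    (hc : A.min' h + stairBase A h ≤ A.max' h + 1) :
    (frank A).sum id = A.sum id ∧ 0 ∉ frank A ∧ (frank A).Nonempty ∧ ¬ Exc (frank A)
      ∧ frank (frank A) = A ∧ (frank A).card + 1 = A.card := by
  set a := A.min' h with ha
  set M := A.max' h with hM
  set b := stairBase A h with hb
  have hbA : b ∈ A := stairBase_mem A h
  have habA : a ∈ A := A.min'_mem h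
  have hMA : M ∈ A := A.max'_mem h
  have hab : a ≤ b := min'_le_stairBase A h
  have hbM : b ≤ M := stairBase_le_max' A h
  have ha1 : 1 ≤ a := by
    rcases Nat.eq_zero_or_pos a with h' | h'
    · exact absurd (h' ▸ habA) h0
    · exact h'
  have hstair : Finset.Icc b M ⊆ A := stairBase_subset A h
  have hbpred : b - 1 ∉ A := pred_stairBase_not_mem A h h0
  have hAle : ∀ x ∈ A, x ≤ M := fun x hx => A.le_max' x hx
  have hAge : ∀ x ∈ A, a ≤ x := fun x hx => A.min'_le x hx
  -- non-exceptional forces 2a ≤ M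
  have h2aM : 2 * a ≤ M := by
    by_contra hcon
    apply hexc
    have hba : b = a := by omega
    have hM2a : M = 2 * a - 1 := by omega
    refine ⟨a, ha1, Or.inl ?_⟩
    rw [← hM2a]
    apply Finset.Subset.antisymm
    · intro x hx
      exact Finset.mem_Icc.2 ⟨hAge x hx, hAle x hx⟩
    · rw [← hba]; exact hstair
  -- the pieces
  set L0 := A.filter (fun x => x < M - a + 1) with hL0
  have hsub : Finset.Icc (M - a + 1) M ⊆ A := by
    refine Finset.Subset.trans (Finset.Icc_subset_Icc ?_ (le_refl M)) hstair
    omega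
  have hsplit : A = L0 ∪ Finset.Icc (M - a + 1) M := split_at A h hsub
  have hdisj : Disjoint L0 (Finset.Icc (M - a + 1) M) := by
    rw [Finset.disjoint_left]
    intro x hx hx'
    have := (Finset.mem_filter.1 hx).2
    have := (Finset.mem_Icc.1 hx').1
    omega
  have haL0 : a ∈ L0 := Finset.mem_filter.2 ⟨habA, by omega⟩
  have hfrank : frank A = ((A.erase a).filter (fun x => x ≤ M - a))
      ∪ Finset.Icc (M - a + 2) (M + 1) := frank_of_le h hc
  have hLL : (A.erase a).filter (fun x => x ≤ M - a) = L0.erase a := by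
    rw [Finset.filter_erase]
    congr 1
    apply Finset.filter_congr
    intro x _
    constructor
    · intro hx; omega
    · intro hx; omega
  rw [hLL] at hfrank
  set B := frank A with hB
  have hBdisj : Disjoint (L0.erase a) (Finset.Icc (M - a + 2) (M + 1)) := by
    rw [Finset.disjoint_left]
    intro x hx hx'
    have h1 := (Finset.mem_filter.1 (Finset.mem_erase.1 hx).2).2
    have h2 := (Finset.mem_Icc.1 hx').1
    omega
  have hMB : M + 1 ∈ B := by
    rw [hfrank]
    exact Finset.mem_union_right _ (Finset.mem_Icc.2 ⟨by omega, le_refl _⟩)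
  have hBne : B.Nonempty := ⟨M + 1, hMB⟩
  have hBmem_gt : ∀ x ∈ B, a < x := by
    intro x hx
    rw [hfrank] at hx
    rcases Finset.mem_union.1 hx with h' | h'
    · have h1 := Finset.mem_erase.1 h'
      have h2 := hAge x (Finset.mem_of_mem_erase (Finset.mem_erase.2 ⟨h1.1, (Finset.mem_filter.1 h1.2).1⟩))
      omega
    · have := (Finset.mem_Icc.1 h').1
      omega
  have hBle : ∀ x ∈ B, x ≤ M + 1 := by
    intro x hx
    rw [hfrank] at hx
    rcases Finset.mem_union.1 hx with h' | h'
    · have := hAle x (Finset.mem_of_mem_erase ((Finset.mem_erase.2 ⟨(Finset.mem_erase.1 h').1, (Finset.mem_filter.1 (Finset.mem_erase.1 h').2).1⟩)))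
      omega
    · exact (Finset.mem_Icc.1 h').2
  have hB0 : 0 ∉ B := fun hc' => by have := hBmem_gt 0 hc'; omega
  have hBmax : B.max' hBne = M + 1 :=
    le_antisymm (Finset.max'_le _ _ _ hBle) (Finset.le_max' _ _ hMB)
  have hMa1B : M - a + 1 ∉ B := by
    rw [hfrank]
    intro hc'
    rcases Finset.mem_union.1 hc' with h' | h'
    · have := (Finset.mem_filter.1 (Finset.mem_erase.1 h').2).2
      omega
    · have := (Finset.mem_Icc.1 h').1
      omega
  have hIccB : Finset.Icc (M - a + 2) (M + 1) ⊆ B := by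
    rw [hfrank]; exact Finset.subset_union_right
  have hBbase : stairBase B hBne = M - a + 2 := by
    apply le_antisymm
    · apply stairBase_le_of_mem
      · exact hIccB (Finset.mem_Icc.2 ⟨le_refl _, by omega⟩)
      · rw [hBmax]; exact hIccB
    · by_contra hcon
      push_neg at hcon
      have h1 : stairBase B hBne ≤ M - a + 1 := by omega
      have h2 : M - a + 1 ∈ B := by
        apply stairBase_subset B hBne
        rw [hBmax]
        refine Finset.mem_Icc.2 ⟨h1, by omega⟩
      exact hMa1B h2
  -- sum
  have hsum : B.sum id = A.sum id := by
    have h1 : B.sum id = (L0.erase a).sum id + (Finset.Icc (M - a + 2) (M + 1)).sum id := by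
      rw [hfrank, Finset.sum_union hBdisj]
    have h2 : A.sum id = L0.sum id + (Finset.Icc (M - a + 1) M).sum id := by
      conv_lhs => rw [hsplit]
      rw [Finset.sum_union hdisj]
    have h3 : (L0.erase a).sum id + a = L0.sum id := by
      have := Finset.sum_erase_add L0 id haL0
      simpa using this
    have h4 : (Finset.Icc (M - a + 2) (M + 1)).sum id
        = (Finset.Icc (M - a + 1) M).sum id + a := by
      have h5 : M - a + 1 ≤ M := by omega
      have h6 := sum_Icc_shift (M - a + 1) M h5
      rw [show M - a + 1 + 1 = M - a + 2 by omega] at h6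
      omega
    omega
  -- card
  have hcard : B.card + 1 = A.card := by
    have h1 : B.card = (L0.erase a).card + a := by
      rw [hfrank, Finset.card_union_of_disjoint hBdisj, Nat.card_Icc]
      omega
    have h2 : A.card = L0.card + a := by
      conv_lhs => rw [hsplit]
      rw [Finset.card_union_of_disjoint hdisj, Nat.card_Icc]
      omega
    have h3 : (L0.erase a).card + 1 = L0.card := Finset.card_erase_add_one haL0
    omega
  -- B not exceptional
  have hBexc : ¬ Exc B := by
    rintro ⟨k, hk, hEk | hEk⟩
    · have hkk : k ≤ 2 * k - 1 := by omega
      have e1 : stairBase B hBne = k :=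
        (stairBase_congr hEk hBne (Finset.nonempty_Icc.2 hkk)).trans (interval_stairBase hkk)
      have e2 : B.max' hBne = 2 * k - 1 :=
        (max'_congr hEk hBne (Finset.nonempty_Icc.2 hkk)).trans (interval_max' hkk)
      omega
    · have hkk : k + 1 ≤ 2 * k := by omega
      have e1 : stairBase B hBne = k + 1 :=
        (stairBase_congr hEk hBne (Finset.nonempty_Icc.2 hkk)).trans (interval_stairBase hkk)
      have e2 : B.max' hBne = 2 * k :=
        (max'_congr hEk hBne (Finset.nonempty_Icc.2 hkk)).trans (interval_max' hkk)
      omega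
  -- involution
  have hffA : frank B = A := by
    have hcond : ¬ (B.min' hBne + stairBase B hBne ≤ B.max' hBne + 1) := by
      have := hBmem_gt _ (B.min'_mem hBne)
      rw [hBbase, hBmax]
      omega
    rw [frank_of_gt hBne hcond, hBbase, hBmax]
    have hfil : B.filter (fun x => x < M - a + 2) = L0.erase a := by
      rw [hfrank, Finset.filter_union]
      rw [Finset.filter_true_of_mem (fun x hx => by
        have := (Finset.mem_filter.1 (Finset.mem_erase.1 hx).2).2
        omega)]
      rw [Finset.filter_false_of_mem (fun x hx => by
        have := (Finset.mem_Icc.1 hx).1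
        omega), Finset.union_empty]
    rw [hfil]
    have e1 : M - a + 2 - 1 = M - a + 1 := by omega
    have e2 : M + 1 - 1 = M := by omega
    have e3 : M + 1 + 1 - (M - a + 2) = a := by omega
    rw [e1, e2, e3]
    rw [Finset.union_assoc, Finset.union_comm (Finset.Icc (M - a + 1) M) {a},
      ← Finset.union_assoc, Finset.union_comm (L0.erase a) {a},
      ← Finset.insert_eq, Finset.insert_erase haL0]
    exact hsplit.symm
  exact ⟨hsum, hB0, hBne, hBexc, hffA, hcard⟩

lemma move2_spec (h : A.Nonempty) (h0 : 0 ∉ A) (hexc : ¬ Exc A)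
    (hc : ¬ (A.min' h + stairBase A h ≤ A.max' h + 1)) :
    (frank A).sum id = A.sum id ∧ 0 ∉ frank A ∧ (frank A).Nonempty ∧ ¬ Exc (frank A)
      ∧ frank (frank A) = A ∧ (frank A).card = A.card + 1 := by
  set a := A.min' h with ha
  set M := A.max' h with hM
  set b := stairBase A h with hb
  have hbA : b ∈ A := stairBase_mem A h
  have habA : a ∈ A := A.min'_mem h
  have hMA : M ∈ A := A.max'_mem h
  have hab : a ≤ b := min'_le_stairBase A h
  have hbM : b ≤ M := stairBase_le_max' A h
  have ha1 : 1 ≤ a := by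
    rcases Nat.eq_zero_or_pos a with h' | h'
    · exact absurd (h' ▸ habA) h0
    · exact h'
  have hstair : Finset.Icc b M ⊆ A := stairBase_subset A h
  have hbpred : b - 1 ∉ A := pred_stairBase_not_mem A h h0
  have hAle : ∀ x ∈ A, x ≤ M := fun x hx => A.le_max' x hx
  have hAge : ∀ x ∈ A, a ≤ x := fun x hx => A.min'_le x hx
  set σ := M + 1 - b with hσ
  have hσ1 : 1 ≤ σ := by omega
  have hσa : σ < a := by omega
  have ha2 : 2 ≤ a := by omega
  -- non-exceptional forces σ + 2 ≤ b
  have hσb : σ + 2 ≤ b := by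
    by_contra hcon
    apply hexc
    have hba : b = a := by omega
    have hMa : M = 2 * a - 2 := by omega
    refine ⟨a - 1, by omega, Or.inr ?_⟩
    rw [show a - 1 + 1 = a by omega, show 2 * (a - 1) = M by omega]
    apply Finset.Subset.antisymm
    · intro x hx
      exact Finset.mem_Icc.2 ⟨hAge x hx, hAle x hx⟩
    · rw [← hba]; exact hstair
  set L2 := A.filter (fun x => x < b) with hL2
  have hsplit : A = L2 ∪ Finset.Icc b M := split_at A h hstair
  have hdisj : Disjoint L2 (Finset.Icc b M) := by
    rw [Finset.disjoint_left]
    intro x hx hx'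
    have := (Finset.mem_filter.1 hx).2
    have := (Finset.mem_Icc.1 hx').1
    omega
  have hL2ub : ∀ x ∈ L2, x ≤ b - 2 := by
    intro x hx
    have h1 := (Finset.mem_filter.1 hx).2
    have h2 : x ≠ b - 1 := fun hc' => hbpred (hc' ▸ (Finset.mem_filter.1 hx).1)
    omega
  have hL2ge : ∀ x ∈ L2, a ≤ x := fun x hx => hAge x (Finset.mem_filter.1 hx).1
  have hfrank : frank A = L2 ∪ Finset.Icc (b - 1) (M - 1) ∪ {σ} := frank_of_gt h hc
  set B := frank A with hB
  have hd1 : Disjoint L2 (Finset.Icc (b - 1) (M - 1)) := by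
    rw [Finset.disjoint_left]
    intro x hx hx'
    have := hL2ub x hx
    have := (Finset.mem_Icc.1 hx').1
    omega
  have hd2 : Disjoint (L2 ∪ Finset.Icc (b - 1) (M - 1)) ({σ} : Finset ℕ) := by
    rw [Finset.disjoint_right]
    intro x hx hx'
    rw [Finset.mem_singleton] at hx
    subst hx
    rcases Finset.mem_union.1 hx' with h' | h'
    · have := hL2ge _ h'; omega
    · have := (Finset.mem_Icc.1 h').1; omega
  have hσB : σ ∈ B := by
    rw [hfrank]; exact Finset.mem_union_right _ (Finset.mem_singleton_self σ)
  have hBne : B.Nonempty := ⟨σ, hσB⟩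
  have hBge : ∀ x ∈ B, σ ≤ x := by
    intro x hx
    rw [hfrank] at hx
    rcases Finset.mem_union.1 hx with h' | h'
    · rcases Finset.mem_union.1 h' with h'' | h''
      · have := hL2ge x h''; omega
      · have := (Finset.mem_Icc.1 h'').1; omega
    · rw [Finset.mem_singleton] at h'; omega
  have hBle : ∀ x ∈ B, x ≤ M - 1 := by
    intro x hx
    rw [hfrank] at hx
    rcases Finset.mem_union.1 hx with h' | h'
    · rcases Finset.mem_union.1 h' with h'' | h''
      · have := hL2ub x h''; omega
      · exact (Finset.mem_Icc.1 h'').2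
    · rw [Finset.mem_singleton] at h'; omega
  have hB0 : 0 ∉ B := fun hc' => by have := hBge 0 hc'; omega
  have hM1B : M - 1 ∈ B := by
    rw [hfrank]
    exact Finset.mem_union_left _ (Finset.mem_union_right _ (Finset.mem_Icc.2 ⟨by omega, le_refl _⟩))
  have hBmin : B.min' hBne = σ :=
    le_antisymm (Finset.min'_le _ _ hσB) (Finset.le_min' _ _ _ hBge)
  have hBmax : B.max' hBne = M - 1 :=
    le_antisymm (Finset.max'_le _ _ _ hBle) (Finset.le_max' _ _ hM1B)
  have hIccB : Finset.Icc (b - 1) (M - 1) ⊆ B := by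
    rw [hfrank]
    exact fun x hx => Finset.mem_union_left _ (Finset.mem_union_right _ hx)
  have hBbase_le : stairBase B hBne ≤ b - 1 := by
    apply stairBase_le_of_mem
    · exact hIccB (Finset.mem_Icc.2 ⟨le_refl _, by omega⟩)
    · rw [hBmax]; exact hIccB
  -- sum
  have hsum : B.sum id = A.sum id := by
    have h1 : B.sum id = L2.sum id + (Finset.Icc (b - 1) (M - 1)).sum id + σ := by
      rw [hfrank, Finset.sum_union hd2, Finset.sum_union hd1, Finset.sum_singleton]
      rfl
    have h2 : A.sum id = L2.sum id + (Finset.Icc b M).sum id := by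
      conv_lhs => rw [hsplit]
      rw [Finset.sum_union hdisj]
    have h5 : b - 1 ≤ M - 1 := by omega
    have h6 := sum_Icc_shift (b - 1) (M - 1) h5
    rw [show b - 1 + 1 = b by omega, show M - 1 + 1 = M by omega] at h6
    omega
  -- card
  have hcard : B.card = A.card + 1 := by
    have h1 : B.card = L2.card + (M - 1 + 1 - (b - 1)) + 1 := by
      rw [hfrank, Finset.card_union_of_disjoint hd2, Finset.card_union_of_disjoint hd1,
        Nat.card_Icc, Finset.card_singleton]
    have h2 : A.card = L2.card + (M + 1 - b) := by
      conv_lhs => rw [hsplit]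
      rw [Finset.card_union_of_disjoint hdisj, Nat.card_Icc]
    omega
  -- B not exceptional
  have hBexc : ¬ Exc B := by
    rintro ⟨k, hk, hEk | hEk⟩
    · have hkk : k ≤ 2 * k - 1 := by omega
      have e1 : B.min' hBne = k :=
        (min'_congr hEk hBne (Finset.nonempty_Icc.2 hkk)).trans (interval_min' hkk)
      have e2 : B.max' hBne = 2 * k - 1 :=
        (max'_congr hEk hBne (Finset.nonempty_Icc.2 hkk)).trans (interval_max' hkk)
      omega
    · have hkk : k + 1 ≤ 2 * k := by omega
      have e1 : B.min' hBne = k + 1 :=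
        (min'_congr hEk hBne (Finset.nonempty_Icc.2 hkk)).trans (interval_min' hkk)
      have e2 : B.max' hBne = 2 * k :=
        (max'_congr hEk hBne (Finset.nonempty_Icc.2 hkk)).trans (interval_max' hkk)
      omega
  -- involution
  have hffA : frank B = A := by
    have hcond : B.min' hBne + stairBase B hBne ≤ B.max' hBne + 1 := by
      rw [hBmin, hBmax]
      omega
    rw [frank_of_le hBne hcond, hBmin, hBmax]
    have hBer : B.erase σ = L2 ∪ Finset.Icc (b - 1) (M - 1) := by
      rw [hfrank]
      ext x
      simp only [Finset.mem_erase, Finset.mem_union, Finset.mem_singleton]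
      constructor
      · rintro ⟨hne, (h' | h') | h'⟩
        · exact Or.inl h'
        · exact Or.inr h'
        · exact absurd h' hne
      · rintro (h' | h')
        · refine ⟨?_, Or.inl (Or.inl h')⟩
          have := hL2ge x h'; omega
        · refine ⟨?_, Or.inl (Or.inr h')⟩
          have := (Finset.mem_Icc.1 h').1; omega
    rw [hBer]
    rw [show M - 1 - σ = b - 2 by omega, show M - 1 + 1 = M by omega,
      show b - 2 + 2 = b by omega]
    rw [Finset.filter_union]
    rw [Finset.filter_true_of_mem (fun x hx => hL2ub x hx)]
    rw [Finset.filter_false_of_mem (fun x hx => by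
      have := (Finset.mem_Icc.1 hx).1
      omega), Finset.union_empty]
    exact hsplit.symm
  exact ⟨hsum, hB0, hBne, hBexc, hffA, hcard⟩

end Moves

section FranklinMain
open scoped Classical

def pent (m : ℤ) : ℤ := m * (3 * m - 1) / 2

lemma two_dvd_pent_num (m : ℤ) : 2 ∣ m * (3 * m - 1) := by
  rcases Int.even_or_odd m with h | h
  · exact Dvd.dvd.mul_right h.two_dvd _
  · refine Dvd.dvd.mul_left ?_ _
    obtain ⟨k, hk⟩ := h
    exact ⟨3 * k + 1, by omega⟩

lemma two_mul_pent (m : ℤ) : 2 * pent m = m * (3 * m - 1) :=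
  Int.mul_ediv_cancel' (two_dvd_pent_num m)

lemma pent_nonneg (m : ℤ) : 0 ≤ pent m := by
  have h2 := two_mul_pent m
  rcases le_or_gt m 0 with h | h
  · nlinarith
  · nlinarith

lemma pent_inj {m m' : ℤ} (h : pent m = pent m') : m = m' := by
  have h2 := two_mul_pent m
  have h2' := two_mul_pent m'
  have key : (m - m') * (3 * (m + m') - 1) = 0 := by
    rw [h] at h2; nlinarith
  rcases mul_eq_zero.1 key with h0 | h0
  · omega
  · omega

def PS (N : ℕ) : Finset (Finset ℕ) :=
  ((Finset.Icc 1 N).powerset).filter (fun S => S.sum id = N)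

lemma mem_PS {N : ℕ} {S : Finset ℕ} : S ∈ PS N ↔ (0 ∉ S ∧ S.sum id = N) := by
  rw [PS, Finset.mem_filter, Finset.mem_powerset]
  constructor
  · rintro ⟨h1, h2⟩
    exact ⟨fun hc => by simpa using Finset.mem_Icc.1 (h1 hc), h2⟩
  · rintro ⟨h1, h2⟩
    refine ⟨fun x hx => Finset.mem_Icc.2 ⟨?_, ?_⟩, h2⟩
    · rcases Nat.eq_zero_or_pos x with h' | h'
      · exact absurd (h' ▸ hx) h1
      · exact h'
    · calc x = id x := rfl
        _ ≤ S.sum id := Finset.single_le_sum (fun i _ => Nat.zero_le _) hx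
        _ = N := h2

lemma frank_spec {A : Finset ℕ} (h : A.Nonempty) (h0 : 0 ∉ A) (hexc : ¬ Exc A) :
    (frank A).sum id = A.sum id ∧ 0 ∉ frank A ∧ (frank A).Nonempty ∧ ¬ Exc (frank A)
      ∧ frank (frank A) = A ∧ ((frank A).card + 1 = A.card ∨ (frank A).card = A.card + 1) := by
  by_cases hc : A.min' h + stairBase A h ≤ A.max' h + 1
  · obtain ⟨a1, a2, a3, a4, a5, a6⟩ := move1_spec h h0 hexc hc
    exact ⟨a1, a2, a3, a4, a5, Or.inl a6⟩
  · obtain ⟨a1, a2, a3, a4, a5, a6⟩ := move2_spec h h0 hexc hc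
    exact ⟨a1, a2, a3, a4, a5, Or.inr a6⟩

lemma sum_nonexc (N : ℕ) (hN : 1 ≤ N) :
    ∑ S ∈ (PS N).filter (fun S => ¬ Exc S), (-1 : ℤ) ^ S.card = 0 := by
  have hkey : ∀ S, S ∈ (PS N).filter (fun S => ¬ Exc S) →
      S.Nonempty ∧ 0 ∉ S ∧ ¬ Exc S ∧ S.sum id = N := by
    intro S hS
    rw [Finset.mem_filter, mem_PS] at hS
    refine ⟨?_, hS.1.1, hS.2, hS.1.2⟩
    rcases Finset.eq_empty_or_nonempty S with h' | h'
    · exfalso; rw [h'] at hS; simp at hS; omega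
    · exact h'
  apply Finset.sum_involution (g := fun S _ => frank S)
  · intro S hS
    obtain ⟨h1, h2, h3, h4⟩ := hkey S hS
    obtain ⟨_, _, _, _, _, hcard⟩ := frank_spec h1 h2 h3
    rcases hcard with h' | h'
    · rw [← h', pow_succ]; ring
    · rw [h', pow_succ]; ring
  · intro S hS _
    obtain ⟨h1, h2, h3, h4⟩ := hkey S hS
    obtain ⟨_, _, _, _, _, hcard⟩ := frank_spec h1 h2 h3
    intro hc
    rw [hc] at hcard
    omega
  · intro S hS
    obtain ⟨h1, h2, h3, h4⟩ := hkey S hS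
    obtain ⟨b1, b2, _, b4, _, _⟩ := frank_spec h1 h2 h3
    rw [Finset.mem_filter, mem_PS]
    exact ⟨⟨b2, b1.trans h4⟩, b4⟩
  · intro S hS
    obtain ⟨h1, h2, h3, h4⟩ := hkey S hS
    obtain ⟨_, _, _, _, b5, _⟩ := frank_spec h1 h2 h3
    exact b5

lemma sum_exc1 (k : ℕ) (hk : 1 ≤ k) :
    (((Finset.Icc k (2 * k - 1)).sum id : ℕ) : ℤ) = pent (k : ℤ) := by
  have hIco : Finset.Icc k (2 * k - 1) = Finset.Ico k (2 * k) := by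
    rw [← Finset.Ico_add_one_right_eq_Icc]; congr 1; omega
  have hcons : (Finset.Ico 0 k).sum id + (Finset.Ico k (2 * k)).sum id
      = (Finset.Ico 0 (2 * k)).sum id := by
    rw [← Finset.sum_union (Finset.Ico_disjoint_Ico_consecutive 0 k (2 * k)),
      Finset.Ico_union_Ico_eq_Ico (Nat.zero_le k) (by omega)]
  have hr1 : (Finset.Ico 0 k).sum id * 2 = k * (k - 1) := by
    rw [← Finset.range_eq_Ico]; exact Finset.sum_range_id_mul_two k
  have hr2 : (Finset.Ico 0 (2 * k)).sum id * 2 = (2 * k) * (2 * k - 1) := by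
    rw [← Finset.range_eq_Ico]; exact Finset.sum_range_id_mul_two (2 * k)
  have hp := two_mul_pent (k : ℤ)
  rw [hIco]
  zify [hk, (by omega : 1 ≤ 2 * k)] at hr1 hr2
  rw [← Nat.cast_sum] at hr1 hr2
  have hconsZ : (((Finset.Ico 0 k).sum id : ℕ) : ℤ) + (((Finset.Ico k (2 * k)).sum id : ℕ) : ℤ)
      = (((Finset.Ico 0 (2 * k)).sum id : ℕ) : ℤ) := by exact_mod_cast hcons
  nlinarith [hr1, hr2, hconsZ, hp]

lemma sum_exc2 (k : ℕ) (hk : 1 ≤ k) :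
    (((Finset.Icc (k + 1) (2 * k)).sum id : ℕ) : ℤ) = pent (-(k : ℤ)) := by
  have hIco : Finset.Icc (k + 1) (2 * k) = Finset.Ico (k + 1) (2 * k + 1) := by
    rw [← Finset.Ico_add_one_right_eq_Icc]
  have hcons : (Finset.Ico 0 (k + 1)).sum id + (Finset.Ico (k + 1) (2 * k + 1)).sum id
      = (Finset.Ico 0 (2 * k + 1)).sum id := by
    rw [← Finset.sum_union (Finset.Ico_disjoint_Ico_consecutive 0 (k + 1) (2 * k + 1)),
      Finset.Ico_union_Ico_eq_Ico (Nat.zero_le _) (by omega)]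
  have hr1 : (Finset.Ico 0 (k + 1)).sum id * 2 = (k + 1) * k := by
    rw [← Finset.range_eq_Ico]
    have := Finset.sum_range_id_mul_two (k + 1)
    simpa using this
  have hr2 : (Finset.Ico 0 (2 * k + 1)).sum id * 2 = (2 * k + 1) * (2 * k) := by
    rw [← Finset.range_eq_Ico]
    have := Finset.sum_range_id_mul_two (2 * k + 1)
    simpa using this
  have hp := two_mul_pent (-(k : ℤ))
  rw [hIco]
  zify at hr1 hr2
  rw [← Nat.cast_sum] at hr1 hr2
  have hconsZ : (((Finset.Ico 0 (k + 1)).sum id : ℕ) : ℤ) + (((Finset.Ico (k + 1) (2 * k + 1)).sum id : ℕ) : ℤ)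
      = (((Finset.Ico 0 (2 * k + 1)).sum id : ℕ) : ℤ) := by exact_mod_cast hcons
  nlinarith [hr1, hr2, hconsZ, hp]

end FranklinMain

section FranklinFinal
open scoped Classical

lemma card_exc1 (k : ℕ) (hk : 1 ≤ k) : (Finset.Icc k (2 * k - 1)).card = k := by
  rw [Nat.card_Icc]; omega

lemma card_exc2 (k : ℕ) : (Finset.Icc (k + 1) (2 * k)).card = k := by
  rw [Nat.card_Icc]; omega

lemma sum_PS_of_exc {N : ℕ} {E : Finset ℕ} (hE : E ∈ PS N) (hEexc : Exc E)
    (hN : 1 ≤ N) (huniq : ∀ S ∈ PS N, Exc S → S = E) :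
    ∑ S ∈ PS N, (-1 : ℤ) ^ S.card = (-1 : ℤ) ^ E.card := by
  rw [← Finset.sum_filter_add_sum_filter_not (PS N) (fun S => Exc S)]
  have h1 : (PS N).filter (fun S => Exc S) = {E} := by
    ext S
    rw [Finset.mem_filter, Finset.mem_singleton]
    constructor
    · rintro ⟨h1, h2⟩; exact huniq S h1 h2
    · rintro rfl; exact ⟨hE, hEexc⟩
  rw [h1, Finset.sum_singleton, sum_nonexc N hN, add_zero]

lemma franklin_pent {N : ℕ} (hN : 1 ≤ N) {m : ℤ} (hm : pent m = (N : ℤ)) :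
    ∑ S ∈ PS N, (-1 : ℤ) ^ S.card = (m.negOnePow : ℤ) := by
  have hm0 : m ≠ 0 := by
    intro hc
    rw [hc] at hm
    have : pent 0 = 0 := rfl
    omega
  rcases lt_or_gt_of_ne hm0 with hneg | hpos
  · -- m < 0, E = Icc (k+1) (2k), k = (-m).toNat
    set k : ℕ := (-m).toNat with hkdef
    have hk1 : 1 ≤ k := by omega
    have hkm : ((k : ℤ)) = -m := by omega
    set E := Finset.Icc (k + 1) (2 * k) with hEdef
    have hEsum : ((E.sum id : ℕ) : ℤ) = (N : ℤ) := by
      rw [hEdef, sum_exc2 k hk1, hkm, neg_neg, hm]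
    have hE : E ∈ PS N := by
      rw [mem_PS]
      constructor
      · intro hc; have := (Finset.mem_Icc.1 hc).1; omega
      · exact_mod_cast hEsum
    have hEexc : Exc E := ⟨k, hk1, Or.inr rfl⟩
    rw [sum_PS_of_exc hE hEexc hN ?uniq]
    · rw [hEdef, card_exc2]
      have : m.negOnePow = ((k : ℤ)).negOnePow := by
        rw [← Int.negOnePow_neg, ← hkm]
      rw [this, Int.coe_negOnePow_natCast]
    case uniq =>
      intro S hS hSexc
      obtain ⟨k', hk', hS1 | hS2⟩ := hSexc
      · exfalso
        have hsum : ((S.sum id : ℕ) : ℤ) = pent (k' : ℤ) := by rw [hS1]; exact sum_exc1 k' hk'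
        rw [(mem_PS.1 hS).2] at hsum
        have := pent_inj (hm.trans hsum)
        omega
      · have hsum : ((S.sum id : ℕ) : ℤ) = pent (-(k' : ℤ)) := by rw [hS2]; exact sum_exc2 k' hk'
        rw [(mem_PS.1 hS).2] at hsum
        have := pent_inj (hm.trans hsum)
        rw [hS2, hEdef]
        have : k' = k := by omega
        rw [this]
  · -- m > 0, E = Icc k (2k - 1), k = m.toNat
    set k : ℕ := m.toNat with hkdef
    have hk1 : 1 ≤ k := by omega
    have hkm : ((k : ℤ)) = m := by omega
    set E := Finset.Icc k (2 * k - 1) with hEdef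
    have hEsum : ((E.sum id : ℕ) : ℤ) = (N : ℤ) := by
      rw [hEdef, sum_exc1 k hk1, hkm, hm]
    have hE : E ∈ PS N := by
      rw [mem_PS]
      constructor
      · intro hc; have := (Finset.mem_Icc.1 hc).1; omega
      · exact_mod_cast hEsum
    have hEexc : Exc E := ⟨k, hk1, Or.inl rfl⟩
    rw [sum_PS_of_exc hE hEexc hN ?uniq]
    · rw [hEdef, card_exc1 k hk1]
      have : m.negOnePow = ((k : ℤ)).negOnePow := by rw [hkm]
      rw [this, Int.coe_negOnePow_natCast]
    case uniq =>
      intro S hS hSexc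
      obtain ⟨k', hk', hS1 | hS2⟩ := hSexc
      · have hsum : ((S.sum id : ℕ) : ℤ) = pent (k' : ℤ) := by rw [hS1]; exact sum_exc1 k' hk'
        rw [(mem_PS.1 hS).2] at hsum
        have := pent_inj (hm.trans hsum)
        rw [hS1, hEdef]
        have : k' = k := by omega
        rw [this]
      · exfalso
        have hsum : ((S.sum id : ℕ) : ℤ) = pent (-(k' : ℤ)) := by rw [hS2]; exact sum_exc2 k' hk'
        rw [(mem_PS.1 hS).2] at hsum
        have := pent_inj (hm.trans hsum)
        omega

lemma franklin_nonpent {N : ℕ} (hN : 1 ≤ N) (hnp : ∀ m : ℤ, pent m ≠ (N : ℤ)) :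
    ∑ S ∈ PS N, (-1 : ℤ) ^ S.card = 0 := by
  rw [← sum_nonexc N hN]
  apply Finset.sum_congr _ (fun _ _ => rfl)
  symm
  apply Finset.filter_true_of_mem
  intro S hS
  rintro ⟨k', hk', hS1 | hS2⟩
  · have hsum : ((S.sum id : ℕ) : ℤ) = pent (k' : ℤ) := by rw [hS1]; exact sum_exc1 k' hk'
    rw [(mem_PS.1 hS).2] at hsum
    exact hnp _ hsum.symm
  · have hsum : ((S.sum id : ℕ) : ℤ) = pent (-(k' : ℤ)) := by rw [hS2]; exact sum_exc2 k' hk'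
    rw [(mem_PS.1 hS).2] at hsum
    exact hnp _ hsum.symm

end FranklinFinal

section ProdCoeff
open PowerSeries
open scoped Classical

lemma pent_toNat_eq {m : ℤ} {N : ℕ} : (pent m).toNat = N ↔ pent m = (N : ℤ) := by
  constructor
  · intro h; have := pent_nonneg m; omega
  · intro h; omega

lemma coeff_prod_eq (N : ℕ) (hN : 1 ≤ N) :
    (coeff N) (∏ n ∈ Finset.range (N + 1), (1 - X ^ (n + 1) : PowerSeries ℤ))
      = ∑ S ∈ PS N, (-1 : ℤ) ^ S.card := by
  have hexp : (∏ n ∈ Finset.range (N + 1), (1 - X ^ (n + 1) : PowerSeries ℤ))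
      = ∑ t ∈ (Finset.range (N + 1)).powerset,
          C ((-1) ^ t.card) * X ^ (∑ i ∈ t, (i + 1)) := by
    have h1 : ∀ n ∈ Finset.range (N + 1),
        (1 - X ^ (n + 1) : PowerSeries ℤ) = (-(X ^ (n + 1))) + 1 := by
      intro n _; ring
    rw [Finset.prod_congr rfl h1, Finset.prod_add]
    apply Finset.sum_congr rfl
    intro t _
    rw [Finset.prod_const_one, mul_one]
    have h2 : ∀ i ∈ t, (-(X ^ (i + 1)) : PowerSeries ℤ) = (C (-1)) * X ^ (i + 1) := by
      intro i _
      rw [map_neg, map_one]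
      ring
    rw [Finset.prod_congr rfl h2, Finset.prod_mul_distrib, Finset.prod_const,
      Finset.prod_pow_eq_pow_sum, ← map_pow]
  rw [hexp, map_sum]
  have h3 : ∀ t ∈ (Finset.range (N + 1)).powerset,
      (coeff N) (C ((-1 : ℤ) ^ t.card) * X ^ (∑ i ∈ t, (i + 1)))
        = if (∑ i ∈ t, (i + 1)) = N then (-1 : ℤ) ^ t.card else 0 := by
    intro t _
    rw [coeff_C_mul, coeff_X_pow]
    by_cases hc : (∑ i ∈ t, (i + 1)) = N
    · rw [if_pos hc, if_pos hc.symm, mul_one]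
    · rw [if_neg hc, if_neg (fun hc' => hc hc'.symm), mul_zero]
  rw [Finset.sum_congr rfl h3, ← Finset.sum_filter]
  apply Finset.sum_nbij' (i := fun t => t.image (· + 1)) (j := fun S => S.image (· - 1))
  · intro t ht
    rw [Finset.mem_filter, Finset.mem_powerset] at ht
    rw [mem_PS]
    constructor
    · intro hc
      obtain ⟨x, _, hx⟩ := Finset.mem_image.1 hc
      omega
    · rw [Finset.sum_image (fun x _ y _ hxy => by omega)]
      simpa using ht.2
  · intro S hS
    rw [mem_PS] at hS
    rw [Finset.mem_filter, Finset.mem_powerset]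
    have hS1 : ∀ x ∈ S, 1 ≤ x := by
      intro x hx
      rcases Nat.eq_zero_or_pos x with h' | h'
      · exact absurd (h' ▸ hx) hS.1
      · exact h'
    have hSN : ∀ x ∈ S, x ≤ N := by
      intro x hx
      calc x = id x := rfl
        _ ≤ S.sum id := Finset.single_le_sum (fun i _ => Nat.zero_le _) hx
        _ = N := hS.2
    constructor
    · intro y hy
      obtain ⟨x, hx, hxy⟩ := Finset.mem_image.1 hy
      rw [Finset.mem_range]
      have := hSN x hx
      omega
    · rw [Finset.sum_image (fun x hx y hy hxy => by
        have := hS1 x hx; have := hS1 y hy; omega)]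
      rw [← hS.2]
      apply Finset.sum_congr rfl
      intro x hx
      have := hS1 x hx
      simp only [id_eq]
      omega
  · intro t ht
    rw [Finset.image_image]
    have : ∀ x ∈ t, (((· - 1) ∘ (· + 1)) x) = id x := by
      intro x _; simp
    rw [Finset.image_congr (fun x hx => this x hx), Finset.image_id]
  · intro S hS
    rw [mem_PS] at hS
    rw [Finset.image_image]
    have : ∀ x ∈ S, (((· + 1) ∘ (· - 1)) x) = id x := by
      intro x hx
      have h1 : 1 ≤ x := by
        rcases Nat.eq_zero_or_pos x with h' | h'
        · exact absurd (h' ▸ hx) hS.1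
        · exact h'
      simp only [Function.comp_apply, id]
      omega
    rw [Finset.image_congr (fun x hx => this x hx), Finset.image_id]
  · intro t _
    rw [Finset.card_image_of_injective _ (fun x y hxy => by omega)]

end ProdCoeff

section Final
open PowerSeries
open scoped Classical

theorem pent_eq_prod :
    seriesSum (fun m => (m.negOnePow : ℤ)) (fun m => (pent m).toNat)
      = seriesProd (fun n => 1 - X ^ (n + 1)) := by
  ext N
  rw [seriesSum, seriesProd, coeff_mk, coeff_mk]
  rcases Nat.eq_zero_or_pos N with hN | hN
  · subst hN
    have hL : (∑' m : ℤ, if (pent m).toNat = 0 then (m.negOnePow : ℤ) else 0) = 1 := by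
      rw [tsum_eq_single 0 (fun m hm => by
        rw [if_neg]
        intro hc
        have h0 : pent m = pent 0 := by rw [pent_toNat_eq.1 hc]; rfl
        exact hm (pent_inj h0))]
      rw [if_pos (by decide)]
      simp
    rw [hL, Finset.prod_range_one]
    simp
  · by_cases hex : ∃ m : ℤ, pent m = (N : ℤ)
    · obtain ⟨m₀, hm₀⟩ := hex
      have hL : (∑' m : ℤ, if (pent m).toNat = N then (m.negOnePow : ℤ) else 0)
          = (m₀.negOnePow : ℤ) := by
        rw [tsum_eq_single m₀ (fun m hm => by
          rw [if_neg]
          intro hc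
          exact hm (pent_inj ((pent_toNat_eq.1 hc).trans hm₀.symm)))]
        rw [if_pos (pent_toNat_eq.2 hm₀)]
      rw [hL, coeff_prod_eq N hN]
      exact (franklin_pent hN hm₀).symm
    · push_neg at hex
      have hL : (∑' m : ℤ, if (pent m).toNat = N then (m.negOnePow : ℤ) else 0) = 0 := by
        rw [tsum_eq_single 0 (fun m _ => by
          rw [if_neg (fun hc => hex m (pent_toNat_eq.1 hc))])]
        rw [if_neg (fun hc => hex 0 (pent_toNat_eq.1 hc))]
      rw [hL, coeff_prod_eq N hN]
      exact (franklin_nonpent hN hex).symm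

end Final

lemma small_mult {u k s : ℤ} (h : u * k = s) (hs : -u < s) (hs' : s < u) (h0 : 0 < u) :
    k = 0 ∧ s = 0 := by
  rcases lt_trichotomy k 0 with hk | hk | hk
  · exfalso; nlinarith
  · refine ⟨hk, ?_⟩; rw [hk, mul_zero] at h; omega
  · exfalso; nlinarith

lemma tsum_pent_eq (v w n₀ : ℤ) {N : ℕ} (hn₀ : pent (v * n₀ + w) = (N : ℤ))
    (hv : v ≠ 0) :
    (∑' n : ℤ, if (pent (v * n + w)).toNat = N then (n.negOnePow : ℤ) else 0)
      = n₀.negOnePow := by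
  rw [tsum_eq_single n₀]
  · rw [if_pos (pent_toNat_eq.2 hn₀)]
  · intro n hne
    rw [if_neg]
    intro hc
    rw [pent_toNat_eq] at hc
    have := pent_inj (hc.trans hn₀.symm)
    exact hne (mul_left_cancel₀ hv (by linarith))

lemma tsum_pent_zero (v w : ℤ) {N : ℕ} (h : ∀ n : ℤ, pent (v * n + w) ≠ (N : ℤ)) :
    (∑' n : ℤ, if (pent (v * n + w)).toNat = N then (n.negOnePow : ℤ) else 0) = 0 := by
  rw [tsum_eq_single 0]
  · rw [if_neg]; intro hc; exact h 0 (pent_toNat_eq.1 hc)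
  · intro n _; rw [if_neg]; intro hc; exact h n (pent_toNat_eq.1 hc)

lemma seriesSum_congr (c : ℤ → ℤ) {e e' : ℤ → ℕ} (h : ∀ n, e n = e' n) :
    seriesSum c e = seriesSum c e' := by
  have : e = e' := funext h
  rw [this]

lemma coeff_neg_one_pow_mul (r N : ℕ) (f : PowerSeries ℤ) :
    coeff N ((-1 : PowerSeries ℤ) ^ r * f) = (-1) ^ r * coeff N f := by
  have : ((-1 : PowerSeries ℤ) ^ r) = C ((-1) ^ r) := by
    rw [map_pow, map_neg, map_one]
  rw [this, coeff_C_mul]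

theorem part1 (t : ℕ) (ht : 2 ≤ t) :
    (seriesSum (fun n => (n.negOnePow : ℤ))
        (fun n => ((2 * (t : ℤ) - 1) * n * (3 * (2 * (t : ℤ) - 1) * n - 1) / 2).toNat))
      + ∑ r ∈ Finset.Icc 1 (t - 1), (-1 : PowerSeries ℤ) ^ r *
          seriesSum (fun n => (n.negOnePow : ℤ))
            (fun n => (((r : ℤ) * (3 * r - 1) + (6 * (r : ℤ) - 1) * (2 * t - 1) * n
                + 3 * (2 * (t : ℤ) - 1) ^ 2 * n ^ 2) / 2).toNat)
      + ∑ r ∈ Finset.Icc 1 (t - 1), (-1 : PowerSeries ℤ) ^ r *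
          seriesSum (fun n => (n.negOnePow : ℤ))
            (fun n => (((r : ℤ) * (3 * r + 1) + (6 * (r : ℤ) + 1) * (2 * t - 1) * n
                + 3 * (2 * (t : ℤ) - 1) ^ 2 * n ^ 2) / 2).toNat)
      = seriesSum (fun m => (m.negOnePow : ℤ)) (fun m => (pent m).toNat) := by
  set u : ℤ := 2 * (t : ℤ) - 1 with hu
  have hu3 : 3 ≤ u := by
    have : (2 : ℤ) ≤ (t : ℤ) := by exact_mod_cast ht
    omega
  have hu0 : u ≠ 0 := by omega
  -- rewrite the three exponent families in terms of pent
  have e₀ : (fun n : ℤ => ((2 * (t : ℤ) - 1) * n * (3 * (2 * (t : ℤ) - 1) * n - 1) / 2).toNat)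
      = fun n : ℤ => (pent (u * n + 0)).toNat := by
    funext n
    congr 1
    show _ / 2 = pent (u * n + 0)
    unfold pent
    congr 1
    ring
  have e₁ : ∀ r : ℕ, (fun n : ℤ => (((r : ℤ) * (3 * r - 1) + (6 * (r : ℤ) - 1) * (2 * t - 1) * n
      + 3 * (2 * (t : ℤ) - 1) ^ 2 * n ^ 2) / 2).toNat)
      = fun n : ℤ => (pent (u * n + (r : ℤ))).toNat := by
    intro r
    funext n
    congr 1
    show _ / 2 = pent (u * n + (r : ℤ))
    unfold pent
    congr 1
    ring
  have e₂ : ∀ r : ℕ, (fun n : ℤ => (((r : ℤ) * (3 * r + 1) + (6 * (r : ℤ) + 1) * (2 * t - 1) * n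
      + 3 * (2 * (t : ℤ) - 1) ^ 2 * n ^ 2) / 2).toNat)
      = fun n : ℤ => (pent ((-u) * n + (-(r : ℤ)))).toNat := by
    intro r
    funext n
    congr 1
    show _ / 2 = pent ((-u) * n + (-(r : ℤ)))
    unfold pent
    congr 1
    ring
  ext N
  rw [map_add, map_add, map_sum, map_sum]
  simp only [coeff_neg_one_pow_mul]
  rw [e₀]
  rw [← hu] at e₁ e₂
  simp only [e₁, e₂]
  simp only [seriesSum, coeff_mk]
  by_cases hex : ∃ m : ℤ, pent m = (N : ℤ)
  · obtain ⟨m₀, hm₀⟩ := hex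
    -- balanced representation m₀ = u * n₀ + s₀
    set n₀ : ℤ := (m₀ + ((t : ℤ) - 1)) / u with hn₀def
    set s₀ : ℤ := m₀ - u * n₀ with hs₀def
    have hdm := Int.mul_ediv_add_emod (m₀ + ((t : ℤ) - 1)) u
    rw [← hn₀def] at hdm
    have hmod0 := Int.emod_nonneg (m₀ + ((t : ℤ) - 1)) hu0
    have hmodlt := Int.emod_lt_of_pos (m₀ + ((t : ℤ) - 1)) (by omega : (0:ℤ) < u)
    have hs₀lb : -((t : ℤ) - 1) ≤ s₀ := by omega
    have hs₀ub : s₀ ≤ (t : ℤ) - 1 := by omega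
    have hrep : m₀ = u * n₀ + s₀ := by omega
    -- RHS
    have hR : (∑' m : ℤ, if (pent m).toNat = N then (m.negOnePow : ℤ) else 0)
        = (m₀.negOnePow : ℤ) := by
      rw [tsum_eq_single m₀ (fun m hne => by
        rw [if_neg]
        intro hc
        exact hne (pent_inj ((pent_toNat_eq.1 hc).trans hm₀.symm)))]
      rw [if_pos (pent_toNat_eq.2 hm₀)]
    rw [hR]
    rcases lt_trichotomy s₀ 0 with hs | hs | hs
    · -- s₀ < 0 : contribution from third family at r₀ = -s₀
      set r₀ : ℕ := (-s₀).toNat with hr₀def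
      have hr₀ : (r₀ : ℤ) = -s₀ := by omega
      have hr₀mem : r₀ ∈ Finset.Icc 1 (t - 1) := by
        rw [Finset.mem_Icc]
        omega
      rw [tsum_pent_zero u 0 (by
        intro n hc
        have := pent_inj (hc.trans hm₀.symm)
        have h2 : u * (n - n₀) = s₀ := by linarith
        have := (small_mult h2 (by omega) (by omega) (by omega)).2
        omega)]
      rw [Finset.sum_eq_zero (fun r hr => by
        rw [Finset.mem_Icc] at hr
        have hrb : (r : ℤ) ≤ (t : ℤ) - 1 := by
          have : (r : ℤ) ≤ ((t : ℕ) - 1 : ℕ) := by exact_mod_cast hr.2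
          omega
        have hr1 : (1 : ℤ) ≤ (r : ℤ) := by exact_mod_cast hr.1
        rw [tsum_pent_zero u (r : ℤ) (by
          intro n hc
          have := pent_inj (hc.trans hm₀.symm)
          have h2 : u * (n - n₀) = s₀ - r := by linarith
          have := (small_mult h2 (by omega) (by omega) (by omega)).2
          omega), mul_zero])]
      rw [Finset.sum_eq_single r₀ (fun r hr hne => by
          rw [Finset.mem_Icc] at hr
          have hrb : (r : ℤ) ≤ (t : ℤ) - 1 := by
            have : (r : ℤ) ≤ ((t : ℕ) - 1 : ℕ) := by exact_mod_cast hr.2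
            omega
          have hr1 : (1 : ℤ) ≤ (r : ℤ) := by exact_mod_cast hr.1
          have hrne : (r : ℤ) ≠ -s₀ := by
            intro hc; apply hne; omega
          rw [tsum_pent_zero (-u) (-(r : ℤ)) (by
            intro n hc
            have := pent_inj (hc.trans hm₀.symm)
            have h2 : u * (-n - n₀) = s₀ + r := by linarith
            have := (small_mult h2 (by omega) (by omega) (by omega)).2
            omega), mul_zero])
        (fun hc => absurd hr₀mem hc)]
      have harg : (-u) * (-n₀) + -(r₀ : ℤ) = m₀ := by
        rw [hr₀, hrep]; ring
      rw [tsum_pent_eq (-u) (-(r₀ : ℤ)) (-n₀) (by rw [harg]; exact hm₀) (by omega)]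
      rw [Int.negOnePow_neg]
      have hpar : m₀.negOnePow = n₀.negOnePow * (r₀ : ℤ).negOnePow := by
        rw [← Int.negOnePow_add, Int.negOnePow_eq_iff]
        refine ⟨((t : ℤ) - 1) * n₀ + s₀, ?_⟩
        rw [hrep, hr₀, hu]; ring
      rw [hpar, Units.val_mul, Int.coe_negOnePow_natCast]
      push_cast
      ring
    · -- s₀ = 0
      have harg : u * n₀ + 0 = m₀ := by rw [hrep, hs]
      rw [tsum_pent_eq u 0 n₀ (by rw [harg]; exact hm₀) hu0]
      rw [Finset.sum_eq_zero (fun r hr => by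
        rw [Finset.mem_Icc] at hr
        have hrb : (r : ℤ) ≤ (t : ℤ) - 1 := by
          have : (r : ℤ) ≤ ((t : ℕ) - 1 : ℕ) := by exact_mod_cast hr.2
          omega
        have hr1 : (1 : ℤ) ≤ (r : ℤ) := by exact_mod_cast hr.1
        rw [tsum_pent_zero u (r : ℤ) (by
          intro n hc
          have := pent_inj (hc.trans hm₀.symm)
          have h2 : u * (n - n₀) = s₀ - r := by linarith
          have := (small_mult h2 (by omega) (by omega) (by omega)).2
          omega), mul_zero])]
      rw [Finset.sum_eq_zero (fun r hr => by
        rw [Finset.mem_Icc] at hr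
        have hrb : (r : ℤ) ≤ (t : ℤ) - 1 := by
          have : (r : ℤ) ≤ ((t : ℕ) - 1 : ℕ) := by exact_mod_cast hr.2
          omega
        have hr1 : (1 : ℤ) ≤ (r : ℤ) := by exact_mod_cast hr.1
        rw [tsum_pent_zero (-u) (-(r : ℤ)) (by
          intro n hc
          have := pent_inj (hc.trans hm₀.symm)
          have h2 : u * (-n - n₀) = s₀ + r := by linarith
          have := (small_mult h2 (by omega) (by omega) (by omega)).2
          omega), mul_zero])]
      have hpar : m₀.negOnePow = n₀.negOnePow := by
        rw [Int.negOnePow_eq_iff]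
        refine ⟨((t : ℤ) - 1) * n₀, ?_⟩
        rw [hrep, hs, hu]; ring
      rw [hpar]
      ring
    · -- s₀ > 0 : contribution from second family at r₀ = s₀
      set r₀ : ℕ := s₀.toNat with hr₀def
      have hr₀ : (r₀ : ℤ) = s₀ := by omega
      have hr₀mem : r₀ ∈ Finset.Icc 1 (t - 1) := by
        rw [Finset.mem_Icc]
        omega
      rw [tsum_pent_zero u 0 (by
        intro n hc
        have := pent_inj (hc.trans hm₀.symm)
        have h2 : u * (n - n₀) = s₀ := by linarith
        have := (small_mult h2 (by omega) (by omega) (by omega)).2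
        omega)]
      rw [Finset.sum_eq_single r₀ (fun r hr hne => by
          rw [Finset.mem_Icc] at hr
          have hrb : (r : ℤ) ≤ (t : ℤ) - 1 := by
            have : (r : ℤ) ≤ ((t : ℕ) - 1 : ℕ) := by exact_mod_cast hr.2
            omega
          have hr1 : (1 : ℤ) ≤ (r : ℤ) := by exact_mod_cast hr.1
          have hrne : (r : ℤ) ≠ s₀ := by
            intro hc; apply hne; omega
          rw [tsum_pent_zero u (r : ℤ) (by
            intro n hc
            have := pent_inj (hc.trans hm₀.symm)
            have h2 : u * (n - n₀) = s₀ - r := by linarith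
            have := (small_mult h2 (by omega) (by omega) (by omega)).2
            omega), mul_zero])
        (fun hc => absurd hr₀mem hc)]
      rw [Finset.sum_eq_zero (fun r hr => by
        rw [Finset.mem_Icc] at hr
        have hrb : (r : ℤ) ≤ (t : ℤ) - 1 := by
          have : (r : ℤ) ≤ ((t : ℕ) - 1 : ℕ) := by exact_mod_cast hr.2
          omega
        have hr1 : (1 : ℤ) ≤ (r : ℤ) := by exact_mod_cast hr.1
        rw [tsum_pent_zero (-u) (-(r : ℤ)) (by
          intro n hc
          have := pent_inj (hc.trans hm₀.symm)
          have h2 : u * (-n - n₀) = s₀ + r := by linarith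
          have := (small_mult h2 (by omega) (by omega) (by omega)).2
          omega), mul_zero])]
      have harg : u * n₀ + (r₀ : ℤ) = m₀ := by rw [hr₀, hrep]
      rw [tsum_pent_eq u (r₀ : ℤ) n₀ (by rw [harg]; exact hm₀) hu0]
      have hpar : m₀.negOnePow = n₀.negOnePow * (r₀ : ℤ).negOnePow := by
        rw [← Int.negOnePow_add, Int.negOnePow_eq_iff]
        refine ⟨((t : ℤ) - 1) * n₀, ?_⟩
        rw [hrep, hr₀, hu]; ring
      rw [hpar, Units.val_mul, Int.coe_negOnePow_natCast]
      push_cast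
      ring
  · push_neg at hex
    rw [tsum_pent_zero u 0 (fun n => hex _)]
    rw [Finset.sum_eq_zero (fun r _ => by
      rw [tsum_pent_zero u (r : ℤ) (fun n => hex _), mul_zero])]
    rw [Finset.sum_eq_zero (fun r _ => by
      rw [tsum_pent_zero (-u) (-(r : ℤ)) (fun n => hex _), mul_zero])]
    have hR : (∑' m : ℤ, if (pent m).toNat = N then (m.negOnePow : ℤ) else 0) = 0 := by
      rw [tsum_eq_single 0 (fun m _ => by
        rw [if_neg]; intro hc; exact hex m (pent_toNat_eq.1 hc))]
      rw [if_neg (fun hc => hex 0 (pent_toNat_eq.1 hc))]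
    rw [hR]
    ring

/-- For every integer `t ≥ 2`, the series `A_t(q)`, namely
`Σ_{n∈ℤ} (-1)^n q^{(2t-1)n(3(2t-1)n-1)/2}
 + Σ_{r=1}^{t-1} (-1)^r Σ_{n∈ℤ} (-1)^n q^{r(3r-1)/2 + (6r-1)(2t-1)n/2 + 3(2t-1)²n²/2}
 + Σ_{r=1}^{t-1} (-1)^r Σ_{n∈ℤ} (-1)^n q^{r(3r+1)/2 + (6r+1)(2t-1)n/2 + 3(2t-1)²n²/2}`,
equals `∏ _{n ≥ 1} (1 - q^n)` as a formal power series. -/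
theorem A_t_eq_euler_product (t : ℕ) (ht : 2 ≤ t) :
    (seriesSum (fun n => (n.negOnePow : ℤ))
        (fun n => ((2 * (t : ℤ) - 1) * n * (3 * (2 * (t : ℤ) - 1) * n - 1) / 2).toNat))
      + ∑ r ∈ Finset.Icc 1 (t - 1), (-1 : PowerSeries ℤ) ^ r *
          seriesSum (fun n => (n.negOnePow : ℤ))
            (fun n => (((r : ℤ) * (3 * r - 1) + (6 * (r : ℤ) - 1) * (2 * t - 1) * n
                + 3 * (2 * (t : ℤ) - 1) ^ 2 * n ^ 2) / 2).toNat)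
      + ∑ r ∈ Finset.Icc 1 (t - 1), (-1 : PowerSeries ℤ) ^ r *
          seriesSum (fun n => (n.negOnePow : ℤ))
            (fun n => (((r : ℤ) * (3 * r + 1) + (6 * (r : ℤ) + 1) * (2 * t - 1) * n
                + 3 * (2 * (t : ℤ) - 1) ^ 2 * n ^ 2) / 2).toNat)
      = seriesProd (fun n => 1 - X ^ (n + 1)) := by
  rw [part1 t ht]
  exact pent_eq_prod
end

section
/- For every integer t ≥ 2, the theta-type series Σ_{n∈ℤ} (-1)^n q^{(2t-1)n/2 + 3(2t-1)^2 n^2/2} equals Π_{n≥1} (1-q^n) times the generating function Π_{n ≥ 1, n ≢ 0, ±(2t-1)(3t-2) mod 3(2t-1)^2} 1/(1-q^n), as formal power series. -/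
open PowerSeries

/-- `∏_{n ≥ 1, n ≢ 0, ±a (mod b)} 1/(1 - q^n)` as a formal power series in `ℤ⟦q⟧`. -/
noncomputable def AG (b a : ℕ) : PowerSeries ℤ :=
  seriesProd fun n =>
    if (n + 1) % b = 0 ∨ (n + 1) % b = a % b ∨ (n + 1 + a) % b = 0 then 1
    else PowerSeries.invOfUnit (1 - X ^ (n + 1)) 1

namespace JTP
open Finset

open Finset

def Nice (f : ℕ → PowerSeries ℤ) : Prop := ∀ n, ∃ g, f n = 1 + X ^ (n+1) * g

lemma coeff_X_pow_mul_of_lt {g : PowerSeries ℤ} {k N : ℕ} (h : N < k) :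
    coeff N (X ^ k * g) = 0 :=
  (PowerSeries.X_pow_dvd_iff.mp (dvd_mul_right _ _)) N h

lemma prod_coeff_stable {f : ℕ → PowerSeries ℤ} (hf : Nice f) {N M M' : ℕ}
    (h1 : N < M) (h2 : M ≤ M') :
    coeff N (∏ n ∈ range M', f n) = coeff N (∏ n ∈ range M, f n) := by
  induction M', h2 using Nat.le_induction with
  | base => rfl
  | succ M' hM' ih =>
      rw [Finset.prod_range_succ]
      obtain ⟨g, hg⟩ := hf M'
      rw [hg, mul_add, mul_one, map_add, ih]
      have h0 : coeff N ((∏ n ∈ range M', f n) * (X ^ (M'+1) * g)) = 0 := by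
        rw [show (∏ n ∈ range M', f n) * (X ^ (M'+1) * g)
            = X^(M'+1) * ((∏ n ∈ range M', f n) * g) by ring]
        exact coeff_X_pow_mul_of_lt (by omega)
      rw [h0, add_zero]

lemma coeff_seriesProd {f : ℕ → PowerSeries ℤ} (hf : Nice f) (N M : ℕ) (h : N < M) :
    coeff N (seriesProd f) = coeff N (∏ n ∈ range M, f n) := by
  rw [seriesProd, coeff_mk]
  exact (prod_coeff_stable hf (Nat.lt_succ_self N) h).symm

lemma nice_mul {f g : ℕ → PowerSeries ℤ} (hf : Nice f) (hg : Nice g) :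
    Nice (fun n => f n * g n) := by
  intro n
  obtain ⟨u, hu⟩ := hf n; obtain ⟨v, hv⟩ := hg n
  refine ⟨u + v + X^(n+1) * (u*v), ?_⟩
  show f n * g n = _
  rw [hu, hv]; ring

lemma seriesProd_mul {f g : ℕ → PowerSeries ℤ} (hf : Nice f) (hg : Nice g) :
    seriesProd f * seriesProd g = seriesProd (fun n => f n * g n) := by
  ext N
  rw [coeff_mul]
  have h1 : ∀ p ∈ Finset.HasAntidiagonal.antidiagonal N,
      coeff p.1 (seriesProd f) * coeff p.2 (seriesProd g)
      = coeff p.1 (∏ n ∈ range (N+1), f n) * coeff p.2 (∏ n ∈ range (N+1), g n) := by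
    intro p hp
    have hp1 : p.1 ≤ N := Finset.HasAntidiagonal.antidiagonal.fst_le hp
    have hp2 : p.2 ≤ N := Finset.HasAntidiagonal.antidiagonal.snd_le hp
    rw [coeff_seriesProd hf _ (N+1) (by omega), coeff_seriesProd hg _ (N+1) (by omega)]
  rw [Finset.sum_congr rfl h1, ← coeff_mul, ← Finset.prod_mul_distrib,
    coeff_seriesProd (nice_mul hf hg) _ _ (Nat.lt_succ_self N)]


open Finset

variable {A : Type*} [CommRing A]

/-- Gaussian binomial-like coefficients, via the q-Pascal recursion. -/
def gb (q : A) : ℕ → ℤ → A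
  | 0, j => if j = 0 then 1 else 0
  | (n+1), j => gb q n j + q ^ (((n : ℤ) + 1 - j).toNat) * gb q n (j - 1)

lemma gb_eq_zero (q : A) : ∀ (n : ℕ) (j : ℤ), (j < 0 ∨ (n:ℤ) < j) → gb q n j = 0 := by
  intro n
  induction n with
  | zero => intro j hj; simp only [gb]; rw [if_neg]; omega
  | succ n ih =>
      intro j hj
      show gb q n j + _ * gb q n (j-1) = 0
      rw [ih j (by omega), ih (j-1) (by omega)]
      ring

lemma gb_succ (q : A) (n : ℕ) (j : ℤ) :
    gb q (n+1) j = gb q n j + q ^ (((n : ℤ) + 1 - j).toNat) * gb q n (j - 1) := rfl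

lemma pascal2 (q : A) : ∀ (n : ℕ) (j : ℤ),
    gb q (n+1) j = q ^ j.toNat * gb q n j + gb q n (j - 1) := by
  intro n
  induction n with
  | zero =>
      intro j
      rw [gb_succ]
      simp only [gb]
      by_cases h0 : j = 0
      · subst h0; norm_num
      · by_cases h1 : j = 1
        · subst h1; norm_num
        · rw [if_neg h0, if_neg (by omega : j - 1 ≠ 0)]
          ring
  | succ n ih =>
      intro j
      have e1 := ih j
      have e2 := ih (j - 1)
      have d1 := gb_succ q n j
      have d2 := gb_succ q n (j - 1)
      rw [show j - 1 - 1 = j - 2 by ring] at e2 d2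
      have hgoal := gb_succ q (n+1) j
      rw [show (((n+1:ℕ) : ℤ) + 1 - j).toNat = (((n:ℤ) + 1 - (j-1)).toNat) by push_cast; omega]
        at hgoal
      rw [hgoal]
      by_cases hb : gb q n (j - 1) = 0
      · linear_combination e1 + q ^ (((n:ℤ) + 1 - (j-1)).toNat) * e2 - q ^ j.toNat * d1 - d2 +
          (q ^ (((n:ℤ) + 1 - (j-1)).toNat) * q ^ ((j-1).toNat)
            - q ^ j.toNat * q ^ (((n:ℤ) + 1 - j).toNat)) * hb
      · have hj : 1 ≤ j ∧ j ≤ (n:ℤ) + 1 := by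
          by_contra hcon
          exact hb (gb_eq_zero q n (j-1) (by omega))
        have hq : q ^ (((n:ℤ) + 1 - (j-1)).toNat) * q ^ ((j-1).toNat)
            = q ^ j.toNat * q ^ (((n:ℤ) + 1 - j).toNat) := by
          rw [← pow_add, ← pow_add]; congr 1; omega
        linear_combination e1 + q ^ (((n:ℤ) + 1 - (j-1)).toNat) * e2 - q ^ j.toNat * d1 - d2 +
          gb q n (j-1) * hq

lemma gbtwo (q : A) (n : ℕ) (k : ℤ) :
    gb q (n+2) k = q ^ k.toNat * gb q n k + (1 + q ^ (n+1)) * gb q n (k-1)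
      + q ^ (((n:ℤ) + 2 - k).toNat) * gb q n (k-2) := by
  have e1 := pascal2 q (n+1) k
  rw [show (n+1)+1 = n+2 from rfl] at e1
  have d1 := gb_succ q n k
  have d2 := gb_succ q n (k - 1)
  rw [show k - 1 - 1 = k - 2 by ring] at d2
  rw [show ((n:ℤ) + 1 - (k-1)).toNat = ((n:ℤ) + 2 - k).toNat by omega] at d2
  by_cases hb : gb q n (k - 1) = 0
  · linear_combination e1 + q ^ k.toNat * d1 + d2 +
      (q ^ k.toNat * q ^ (((n:ℤ) + 1 - k).toNat) - q ^ (n+1)) * hb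
  · have hk : 1 ≤ k ∧ k ≤ (n:ℤ) + 1 := by
      by_contra hcon
      exact hb (gb_eq_zero q n (k-1) (by omega))
    have hq : q ^ (k.toNat) * q ^ (((n:ℤ) + 1 - k).toNat) = q ^ (n+1) := by
      rw [← pow_add]; congr 1; omega
    linear_combination e1 + q ^ k.toNat * d1 + d2 + gb q n (k-1) * hq

lemma gb_map {B : Type*} [CommRing B] (f : A →+* B) (q : A) :
    ∀ (n : ℕ) (j : ℤ), f (gb q n j) = gb (f q) n j := by
  intro n
  induction n with
  | zero => intro j; simp only [gb]; split <;> simp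
  | succ n ih => intro j; rw [gb_succ, gb_succ, map_add, map_mul, map_pow, ih, ih]

/-- The truncated Euler product `∏_{r=1}^{k} (1 - (Polynomial.X : Polynomial ℤ)^r)`. -/
noncomputable def Epoly (k : ℕ) : Polynomial ℤ := ∏ r ∈ range k, (1 - (Polynomial.X : Polynomial ℤ)^(r+1))

lemma Epoly_succ (k : ℕ) : Epoly (k+1) = Epoly k * (1 - (Polynomial.X : Polynomial ℤ)^(k+1)) := Finset.prod_range_succ _ _

lemma gb_mul : ∀ (n : ℕ) (j : ℤ), 0 ≤ j → j ≤ (n:ℤ) →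
    gb (Polynomial.X : Polynomial ℤ) n j * Epoly j.toNat = ∏ r ∈ Ico (n - j.toNat) n, (1 - (Polynomial.X : Polynomial ℤ)^(r+1)) := by
  intro n
  induction n with
  | zero =>
      intro j h0 h1
      have : j = 0 := by omega
      subst this
      simp [gb, Epoly]
  | succ n ih =>
      intro j h0 h1
      have d := gb_succ (Polynomial.X : Polynomial ℤ) n j
      by_cases hj0 : j = 0
      · subst hj0
        rw [gb_eq_zero (Polynomial.X : Polynomial ℤ) n (0-1) (by omega)] at d
        have ihz := ih 0 le_rfl (by omega)
        simp only [Int.toNat_zero, Nat.sub_zero, Finset.Ico_self, Finset.prod_empty] at ihz ⊢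
        rw [d, mul_zero, add_zero]
        exact ihz
      · have hj1 : 1 ≤ j := by omega
        set j' := j.toNat with hj'
        have hjj : (j : ℤ) = (j' : ℤ) := by omega
        by_cases hjn : j ≤ (n : ℤ)
        · -- interior case
          have hj'n : 1 ≤ j' ∧ j' ≤ n := by omega
          rw [show (((n:ℤ) + 1 - j).toNat) = n + 1 - j' by omega] at d
          have h1' := ih j h0 hjn
          have h2' := ih (j-1) (by omega) (by omega)
          rw [show (j-1).toNat = j' - 1 by omega] at h2'
          rw [show n - (j' - 1) = n + 1 - j' by omega] at h2'
          rw [Finset.prod_eq_prod_Ico_succ_bot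
            (show n - j' < n by omega) (fun r => 1 - (Polynomial.X : Polynomial ℤ)^(r+1))] at h1'
          rw [show n - j' + 1 = n + 1 - j' by omega] at h1'
          have hEp : Epoly j' = Epoly (j' - 1) * (1 - (Polynomial.X : Polynomial ℤ)^(j')) := by
            conv_lhs => rw [show j' = (j'-1)+1 by omega]
            rw [Epoly_succ, show j' - 1 + 1 = j' by omega]
          have hRHS : ∏ r ∈ Ico (n + 1 - j') (n+1), (1 - (Polynomial.X : Polynomial ℤ)^(r+1))
              = (∏ r ∈ Ico (n + 1 - j') n, (1 - (Polynomial.X : Polynomial ℤ)^(r+1))) * (1 - (Polynomial.X : Polynomial ℤ)^(n+1)) :=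
            Finset.prod_Ico_succ_top (by omega) _
          have hx1 : (Polynomial.X : Polynomial ℤ)^(n+1-j') * (Polynomial.X : Polynomial ℤ)^(j') = (Polynomial.X : Polynomial ℤ)^(n+1) := by
            rw [← pow_add]; congr 1; omega
          set P := ∏ r ∈ Ico (n + 1 - j') n, (1 - (Polynomial.X : Polynomial ℤ)^(r+1)) with hP
          linear_combination Epoly j' * d + h1' + (Polynomial.X : Polynomial ℤ)^(n+1-j') * gb (Polynomial.X : Polynomial ℤ) n (j-1) * hEp
            + (Polynomial.X : Polynomial ℤ)^(n+1-j') * (1 - (Polynomial.X : Polynomial ℤ)^(j')) * h2' - hRHS - P * hx1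
        · -- j = n + 1
          have hjeq : j = (n:ℤ) + 1 := by omega
          have hj'eq : j' = n + 1 := by omega
          rw [gb_eq_zero (Polynomial.X : Polynomial ℤ) n j (by omega),
            show (((n:ℤ) + 1 - j).toNat) = 0 by omega] at d
          have h2' := ih (j-1) (by omega) (by omega)
          rw [show (j-1).toNat = n by omega, Nat.sub_self] at h2'
          rw [hj'eq, show n + 1 - (n+1) = 0 by omega]
          have hRHS : ∏ r ∈ Ico 0 (n+1), (1 - (Polynomial.X : Polynomial ℤ)^(r+1))
              = (∏ r ∈ Ico 0 n, (1 - (Polynomial.X : Polynomial ℤ)^(r+1))) * (1 - (Polynomial.X : Polynomial ℤ)^(n+1)) :=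
            Finset.prod_Ico_succ_top (by omega) _
          rw [hRHS, Epoly_succ, d]
          calc (0 + (Polynomial.X : Polynomial ℤ)^0 * gb (Polynomial.X : Polynomial ℤ) n (j-1)) * (Epoly n * (1 - (Polynomial.X : Polynomial ℤ)^(n+1)))
              = (gb (Polynomial.X : Polynomial ℤ) n (j-1) * Epoly n) * (1 - (Polynomial.X : Polynomial ℤ)^(n+1)) := by ring
            _ = _ := by rw [h2']

lemma gb_mul_full (n : ℕ) (j : ℤ) (h0 : 0 ≤ j) (h1 : j ≤ (n:ℤ)) :
    gb (Polynomial.X : Polynomial ℤ) n j * (Epoly j.toNat * Epoly (n - j.toNat)) = Epoly n := by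
  have h := gb_mul n j h0 h1
  have hsplit : (∏ r ∈ range (n - j.toNat), (1 - (Polynomial.X : Polynomial ℤ)^(r+1)))
      * ∏ r ∈ Ico (n - j.toNat) n, (1 - (Polynomial.X : Polynomial ℤ)^(r+1))
      = ∏ r ∈ range n, (1 - (Polynomial.X : Polynomial ℤ)^(r+1)) :=
    Finset.prod_range_mul_prod_Ico _ (by omega)
  calc gb (Polynomial.X : Polynomial ℤ) n j * (Epoly j.toNat * Epoly (n - j.toNat))
      = (∏ r ∈ range (n - j.toNat), (1 - (Polynomial.X : Polynomial ℤ)^(r+1)))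
        * (gb (Polynomial.X : Polynomial ℤ) n j * Epoly j.toNat) := by rw [Epoly, Epoly]; ring
    _ = (∏ r ∈ range (n - j.toNat), (1 - (Polynomial.X : Polynomial ℤ)^(r+1)))
        * ∏ r ∈ Ico (n - j.toNat) n, (1 - (Polynomial.X : Polynomial ℤ)^(r+1)) := by rw [h]
    _ = Epoly n := hsplit

lemma Epoly_ne_zero (k : ℕ) : Epoly k ≠ 0 := by
  rw [Epoly, Finset.prod_ne_zero_iff]
  intro r _
  intro hcon
  have : Polynomial.eval 0 (1 - (Polynomial.X : Polynomial ℤ)^(r+1)) = 0 := by rw [hcon]; simp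
  simp at this

lemma gb_symm (n : ℕ) (j : ℤ) (h0 : 0 ≤ j) (h1 : j ≤ (n:ℤ)) :
    gb (Polynomial.X : Polynomial ℤ) n j = gb (Polynomial.X : Polynomial ℤ) n ((n:ℤ) - j) := by
  have e1 := gb_mul_full n j h0 h1
  have e2 := gb_mul_full n ((n:ℤ) - j) (by omega) (by omega)
  rw [show ((n:ℤ) - j).toNat = n - j.toNat by omega] at e2
  rw [show n - (n - j.toNat) = j.toNat by omega] at e2
  have hD : Epoly j.toNat * Epoly (n - j.toNat) ≠ 0 :=
    mul_ne_zero (Epoly_ne_zero _) (Epoly_ne_zero _)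
  apply mul_right_cancel₀ hD
  linear_combination e1 - e2

lemma prod_one_sub_aux (d : ℕ) : ∀ (s : Finset ℕ), (∀ r ∈ s, d ≤ r) →
    ∃ h : Polynomial ℤ, ∏ r ∈ s, (1 - (Polynomial.X : Polynomial ℤ)^(r+1)) = 1 + (Polynomial.X : Polynomial ℤ)^(d+1) * h := by
  intro s
  induction s using Finset.induction_on with
  | empty => exact fun _ => ⟨0, by simp⟩
  | @insert a s ha ih =>
      intro hmem
      obtain ⟨h, hh⟩ := ih (fun r hr => hmem r (Finset.mem_insert_of_mem hr))
      have hda : d ≤ a := hmem a (Finset.mem_insert_self a s)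
      refine ⟨h - (Polynomial.X : Polynomial ℤ)^(a-d) * (1 + (Polynomial.X : Polynomial ℤ)^(d+1) * h), ?_⟩
      rw [Finset.prod_insert ha, hh]
      have hx : (Polynomial.X : Polynomial ℤ)^(d+1) * (Polynomial.X : Polynomial ℤ)^(a-d) = (Polynomial.X : Polynomial ℤ)^(a+1) := by
        rw [← pow_add]; congr 1; omega
      linear_combination ((1:Polynomial ℤ) + (Polynomial.X : Polynomial ℤ)^(d+1) * h) * hx

lemma eul_gb_one_aux (M : ℕ) (j : ℤ) (h0 : 0 ≤ j) (h2 : j.toNat ≤ M) (h3 : j ≤ 2*(M:ℤ)) :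
    ∃ h : Polynomial ℤ, Epoly M * gb (Polynomial.X : Polynomial ℤ) (2*M) j = 1 + Polynomial.X ^ (j.toNat + 1) * h := by
  have key := gb_mul (2*M) j h0 (by omega)
  have hsplit : (∏ r ∈ range j.toNat, (1 - (Polynomial.X : Polynomial ℤ)^(r+1)))
      * ∏ r ∈ Ico j.toNat M, (1 - (Polynomial.X : Polynomial ℤ)^(r+1))
      = ∏ r ∈ range M, (1 - (Polynomial.X : Polynomial ℤ)^(r+1)) :=
    Finset.prod_range_mul_prod_Ico _ (by omega)
  obtain ⟨h1, hh1⟩ := prod_one_sub_aux j.toNat (Ico j.toNat M) (fun r hr => (Finset.mem_Ico.mp hr).1)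
  obtain ⟨h2', hh2⟩ := prod_one_sub_aux j.toNat (Ico (2*M - j.toNat) (2*M))
    (fun r hr => le_trans (by omega) (Finset.mem_Ico.mp hr).1)
  refine ⟨h1 + h2' + (Polynomial.X : Polynomial ℤ)^(j.toNat+1) * (h1 * h2'), ?_⟩
  calc Epoly M * gb (Polynomial.X : Polynomial ℤ) (2*M) j
      = (gb (Polynomial.X : Polynomial ℤ) (2*M) j * Epoly j.toNat) *
        ∏ r ∈ Ico j.toNat M, (1 - (Polynomial.X : Polynomial ℤ)^(r+1)) := by rw [Epoly, ← hsplit, Epoly]; ring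
    _ = (1 + (Polynomial.X : Polynomial ℤ)^(j.toNat+1) * h2') * (1 + (Polynomial.X : Polynomial ℤ)^(j.toNat+1) * h1) := by rw [key, hh1, hh2]
    _ = _ := by ring

lemma eul_gb_one (M : ℕ) (j : ℤ) (h0 : 0 ≤ j) (h3 : j ≤ 2*(M:ℤ)) :
    ∃ h : Polynomial ℤ, Epoly M * gb (Polynomial.X : Polynomial ℤ) (2*M) j
      = 1 + Polynomial.X ^ (min j.toNat (2*M - j.toNat) + 1) * h := by
  by_cases hc : j.toNat ≤ M
  · rw [show min j.toNat (2*M - j.toNat) = j.toNat by omega]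
    exact eul_gb_one_aux M j h0 hc h3
  · rw [show min j.toNat (2*M - j.toNat) = 2*M - j.toNat by omega]
    rw [gb_symm (2*M) j h0 (by push_cast; omega)]
    have := eul_gb_one_aux M ((2*(M:ℕ):ℤ) - j) (by omega) (by omega) (by omega)
    rw [show ((2*(M:ℕ):ℤ) - j).toNat = 2*M - j.toNat by omega] at this
    push_cast at this ⊢
    exact this

/-- The exponent `j(j-1)/2` as a natural number. -/
def ee (j : ℤ) : ℕ := (j * (j - 1) / 2).toNat

lemma ee_nonneg (j : ℤ) : 0 ≤ j * (j - 1) := by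
  rcases le_or_gt j 0 with h | h
  · nlinarith [mul_nonneg (by omega : (0:ℤ) ≤ -j) (by omega : (0:ℤ) ≤ 1 - j)]
  · exact mul_nonneg (by omega) (by omega)

lemma ee_two (j : ℤ) : 2 * (ee j : ℤ) = j * (j - 1) := by
  have hd : (2:ℤ) ∣ j * (j - 1) := by
    rcases Int.even_or_odd j with h | h
    · exact Dvd.dvd.mul_right h.two_dvd _
    · refine Dvd.dvd.mul_left ?_ _
      rcases h with ⟨k, hk⟩
      exact ⟨k, by omega⟩
  rw [ee, Int.toNat_of_nonneg (Int.ediv_nonneg (ee_nonneg j) (by norm_num))]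
  exact Int.mul_ediv_cancel' hd

lemma ee_succ (j : ℤ) : (ee (j+1) : ℤ) = (ee j : ℤ) + j := by
  have h1 := ee_two j
  have h2 := ee_two (j+1)
  nlinarith [h1, h2]

/-- The `j`-th term of the (finite) Jacobi triple product sum. -/
def Tm (x q : A) (M : ℕ) (j : ℤ) : A :=
  ((j.negOnePow : ℤ) : A) * (x ^ ((M:ℤ) + j).toNat * q ^ (ee j) * gb q (2*M) ((M:ℤ) + j))

lemma Tm_zero (x q : A) (M : ℕ) (j : ℤ) (h : j < -(M:ℤ) ∨ (M:ℤ) < j) : Tm x q M j = 0 := by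
  rw [Tm, gb_eq_zero q (2*M) ((M:ℤ) + j) (by push_cast; omega)]
  ring

lemma negOnePow_cast_succ (j : ℤ) : (((j+1).negOnePow : ℤ) : A) = -(((j.negOnePow : ℤ) : A)) := by
  rw [Int.negOnePow_succ]; push_cast; ring

lemma negOnePow_cast_pred (j : ℤ) : (((j-1).negOnePow : ℤ) : A) = -(((j.negOnePow : ℤ) : A)) := by
  have := negOnePow_cast_succ (A := A) (j - 1)
  rw [show j - 1 + 1 = j by ring] at this
  rw [this]; ring

lemma Tm_step (x q : A) (M : ℕ) (j : ℤ) (h1 : -(M:ℤ)-1 ≤ j) (h2 : j ≤ (M:ℤ)+1) :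
    Tm x q (M+1) j = Tm x q M j * (x * (1 + q^(2*M+1)))
      - Tm x q M (j+1) * q^(M+1) - Tm x q M (j-1) * (x^2 * q^M) := by
  have hgb := gbtwo q (2*M) ((M:ℤ)+1+j)
  rw [show (M:ℤ)+1+j-1 = (M:ℤ)+j by ring, show (M:ℤ)+1+j-2 = (M:ℤ)+j-1 by ring,
      show ((2*M:ℕ):ℤ)+2-((M:ℤ)+1+j) = (M:ℤ)+1-j by push_cast; ring] at hgb
  simp only [Tm]
  rw [show 2*(M+1) = 2*M+2 by ring]
  rw [show ((M+1:ℕ):ℤ) = (M:ℤ)+1 by push_cast; ring]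
  rw [show (M:ℤ)+(j+1) = (M:ℤ)+1+j by ring, show (M:ℤ)+(j-1) = (M:ℤ)+j-1 by ring]
  rw [negOnePow_cast_succ, negOnePow_cast_pred]
  set c : A := ((j.negOnePow : ℤ) : A) with hc
  set G1 : A := gb q (2*M) ((M:ℤ)+1+j) with hG1
  set G0 : A := gb q (2*M) ((M:ℤ)+j) with hG0
  set Gm : A := gb q (2*M) ((M:ℤ)+j-1) with hGm
  have hq1 : q^(ee (j+1)) * q^(M+1) = q^(ee j) * q^(((M:ℤ)+1+j).toNat) := by
    rw [← pow_add, ← pow_add]; congr 1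
    have := ee_succ j
    omega
  by_cases hA : 1-(M:ℤ) ≤ j
  · have hx1 : x^(((M:ℤ)+j).toNat) * x = x^(((M:ℤ)+1+j).toNat) := by
      rw [← pow_succ]; congr 1; omega
    have hx2 : x^(((M:ℤ)+j-1).toNat) * x^2 = x^(((M:ℤ)+1+j).toNat) := by
      rw [← pow_add]; congr 1; omega
    have hq2 : q^(ee (j-1)) * q^(M) = q^(ee j) * q^(((M:ℤ)+1-j).toNat) := by
      rw [← pow_add, ← pow_add]; congr 1
      have := ee_succ (j-1)
      rw [show j - 1 + 1 = j by ring] at this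
      omega
    linear_combination c * q^(ee j) * x^(((M:ℤ)+1+j).toNat) * hgb
      - c * (1+q^(2*M+1)) * G0 * q^(ee j) * hx1
      - c * x^(((M:ℤ)+1+j).toNat) * G1 * hq1
      - c * Gm * q^(ee (j-1)) * q^(M) * hx2
      - c * Gm * x^(((M:ℤ)+1+j).toNat) * hq2
  · by_cases hB : j = -(M:ℤ)
    · have hGm0 : Gm = 0 := gb_eq_zero q (2*M) _ (by omega)
      have hx1 : x^(((M:ℤ)+j).toNat) * x = x^(((M:ℤ)+1+j).toNat) := by
        rw [← pow_succ]; congr 1; omega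
      rw [hGm0] at hgb ⊢
      linear_combination c * q^(ee j) * x^(((M:ℤ)+1+j).toNat) * hgb
        - c * (1+q^(2*M+1)) * G0 * q^(ee j) * hx1
        - c * x^(((M:ℤ)+1+j).toNat) * G1 * hq1
    · have hC : j = -(M:ℤ)-1 := by omega
      have hG00 : G0 = 0 := gb_eq_zero q (2*M) _ (by omega)
      have hGm0 : Gm = 0 := gb_eq_zero q (2*M) _ (by omega)
      rw [hG00, hGm0] at hgb ⊢
      linear_combination c * q^(ee j) * x^(((M:ℤ)+1+j).toNat) * hgb
        - c * x^(((M:ℤ)+1+j).toNat) * G1 * hq1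



lemma sum_Icc_shift (f : ℤ → A) (a b d : ℤ) :
    ∑ j ∈ Finset.Icc (a+d) (b+d), f j = ∑ j ∈ Finset.Icc a b, f (j + d) := by
  rw [← Finset.map_add_right_Icc, Finset.sum_map]
  rfl

theorem fjtp (x q : A) : ∀ M : ℕ,
    (∏ k ∈ range M, (1 - x * q^k)) * (∏ k ∈ range M, (x - q^(k+1)))
    = ∑ j ∈ Finset.Icc (-(M:ℤ)) (M:ℤ), Tm x q M j := by
  intro M
  induction M with
  | zero =>
      norm_num [Finset.Icc_self, Finset.sum_singleton]
      simp [Tm, gb, ee]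
  | succ M ih =>
      rw [Finset.prod_range_succ, Finset.prod_range_succ]
      rw [show (∏ k ∈ range M, (1 - x * q^k)) * (1 - x*q^M)
          * ((∏ k ∈ range M, (x - q^(k+1))) * (x - q^(M+1)))
          = ((∏ k ∈ range M, (1 - x * q^k)) * (∏ k ∈ range M, (x - q^(k+1))))
            * ((1 - x*q^M) * (x - q^(M+1))) by ring, ih]
      rw [show (∑ j ∈ Finset.Icc (-(M:ℤ)) (M:ℤ), Tm x q M j) * ((1 - x*q^M) * (x - q^(M+1)))
          = (∑ j ∈ Finset.Icc (-(M:ℤ)) (M:ℤ), Tm x q M j) * (x*(1+q^(2*M+1)))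
            - (∑ j ∈ Finset.Icc (-(M:ℤ)) (M:ℤ), Tm x q M j) * q^(M+1)
            - (∑ j ∈ Finset.Icc (-(M:ℤ)) (M:ℤ), Tm x q M j) * (x^2*q^M) by ring]
      have e1 : (∑ j ∈ Finset.Icc (-(M:ℤ)) (M:ℤ), Tm x q M j) * (x*(1+q^(2*M+1)))
          = ∑ j ∈ Finset.Icc (-(M:ℤ)-1) ((M:ℤ)+1), Tm x q M j * (x*(1+q^(2*M+1))) := by
        rw [Finset.sum_mul]
        apply Finset.sum_subset (Finset.Icc_subset_Icc (by omega) (by omega))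
        intro y hy hny
        simp only [Finset.mem_Icc] at hy hny
        rw [Tm_zero x q M y (by omega)]
        ring
      have e2 : (∑ j ∈ Finset.Icc (-(M:ℤ)) (M:ℤ), Tm x q M j) * q^(M+1)
          = ∑ j ∈ Finset.Icc (-(M:ℤ)-1) ((M:ℤ)+1), Tm x q M (j+1) * q^(M+1) := by
        rw [Finset.sum_mul]
        have hs := sum_Icc_shift (fun j => Tm x q M (j+1) * q^(M+1)) (-(M:ℤ)) ((M:ℤ)+2) (-1)
        rw [show -(M:ℤ) + -1 = -(M:ℤ)-1 by ring, show (M:ℤ)+2 + -1 = (M:ℤ)+1 by ring] at hs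
        rw [hs]
        simp only [show ∀ j : ℤ, j + -1 + 1 = j from fun j => by ring]
        apply Finset.sum_subset (Finset.Icc_subset_Icc (by omega) (by omega))
        intro y hy hny
        simp only [Finset.mem_Icc] at hy hny
        rw [Tm_zero x q M y (by omega)]
        ring
      have e3 : (∑ j ∈ Finset.Icc (-(M:ℤ)) (M:ℤ), Tm x q M j) * (x^2*q^M)
          = ∑ j ∈ Finset.Icc (-(M:ℤ)-1) ((M:ℤ)+1), Tm x q M (j-1) * (x^2*q^M) := by
        rw [Finset.sum_mul]
        have hs := sum_Icc_shift (fun j => Tm x q M (j-1) * (x^2*q^M)) (-(M:ℤ)-2) ((M:ℤ)) 1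
        rw [show -(M:ℤ)-2 + 1 = -(M:ℤ)-1 by ring, show (M:ℤ) + 1 = (M:ℤ)+1 by ring] at hs
        rw [hs]
        simp only [show ∀ j : ℤ, j + 1 - 1 = j from fun j => by ring]
        apply Finset.sum_subset (Finset.Icc_subset_Icc (by omega) (by omega))
        intro y hy hny
        simp only [Finset.mem_Icc] at hy hny
        rw [Tm_zero x q M y (by omega)]
        ring
      rw [e1, e2, e3, ← Finset.sum_sub_distrib, ← Finset.sum_sub_distrib]
      rw [show -(((M+1:ℕ)):ℤ) = -(M:ℤ)-1 by push_cast; ring,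
          show (((M+1:ℕ)):ℤ) = (M:ℤ)+1 by push_cast; ring]
      refine (Finset.sum_congr rfl fun j hj => ?_).symm
      have hj' := Finset.mem_Icc.mp hj
      exact Tm_step x q M j (by omega) (by omega)


open Finset

lemma mod_eq_zero_iff_eq (b x : ℕ) (h1 : 1 ≤ x) (h2 : x < 2*b) : x % b = 0 ↔ x = b := by
  constructor
  · intro h
    obtain ⟨k, hk⟩ := Nat.dvd_of_mod_eq_zero h
    rcases k with _ | _ | k
    · omega
    · omega
    · exfalso
      have : b * 2 ≤ b * (k+1+1) := Nat.mul_le_mul_left b (by omega)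
      omega
  · intro h; rw [h, Nat.mod_self]

lemma cond_iff (b a c : ℕ) (ha : 1 ≤ a) (hc : 1 ≤ c) (hb : a + c = b) (M i : ℕ) (hi : i < b) :
    ((b*M + i + 1) % b = 0 ∨ (b*M + i + 1) % b = a % b ∨ (b*M + i + 1 + a) % b = 0)
    ↔ (i + 1 = a ∨ i + 1 = c ∨ i + 1 = b) := by
  have hab : a < b := by omega
  have e1 : (b*M + i + 1) % b = (i+1) % b := by
    rw [show b*M + i + 1 = (i+1) + b*M by ring, Nat.add_mul_mod_self_left]
  have e2 : (b*M + i + 1 + a) % b = (i+1+a) % b := by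
    rw [show b*M + i + 1 + a = (i+1+a) + b*M by ring, Nat.add_mul_mod_self_left]
  have ha' : a % b = a := Nat.mod_eq_of_lt hab
  rw [e1, e2, ha']
  have h1 : (i+1) % b = 0 ↔ i + 1 = b := mod_eq_zero_iff_eq b (i+1) (by omega) (by omega)
  have h3 : (i+1+a) % b = 0 ↔ i + 1 = c := by
    rw [mod_eq_zero_iff_eq b (i+1+a) (by omega) (by omega)]
    omega
  have h2 : (i+1) % b = a ↔ i + 1 = a := by
    constructor
    · intro h
      by_cases hib : i + 1 = b
      · rw [hib, Nat.mod_self] at h; omega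
      · rwa [Nat.mod_eq_of_lt (by omega)] at h
    · intro h; rw [h, Nat.mod_eq_of_lt (by omega)]
  tauto

lemma filter_triple (b a c : ℕ) (ha : 1 ≤ a) (hc : 1 ≤ c) (hb : a + c = b) (hac : a ≠ c) :
    (range b).filter (fun i => i + 1 = a ∨ i + 1 = c ∨ i + 1 = b)
      = {a - 1, c - 1, b - 1} := by
  ext i
  simp only [Finset.mem_filter, Finset.mem_range, Finset.mem_insert, Finset.mem_singleton]
  omega

lemma block_prod (b a c : ℕ) (ha : 1 ≤ a) (hc : 1 ≤ c) (hb : a + c = b) (hac : a ≠ c) (M : ℕ) :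
    (∏ i ∈ range b, (if (b*M + i + 1) % b = 0 ∨ (b*M + i + 1) % b = a % b
        ∨ (b*M + i + 1 + a) % b = 0 then (1 : PowerSeries ℤ) - X^(b*M + i + 1) else 1))
    = (1 - X^(b*M+a)) * (1 - X^(b*M+c)) * (1 - X^(b*(M+1))) := by
  have h1 : ∀ i ∈ range b, (if (b*M + i + 1) % b = 0 ∨ (b*M + i + 1) % b = a % b
        ∨ (b*M + i + 1 + a) % b = 0 then (1 : PowerSeries ℤ) - X^(b*M + i + 1) else 1)
      = (if i + 1 = a ∨ i + 1 = c ∨ i + 1 = b then (1 : PowerSeries ℤ) - X^(b*M + i + 1) else 1) := by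
    intro i hi
    rw [Finset.mem_range] at hi
    rw [if_congr (cond_iff b a c ha hc hb M i hi) rfl rfl]
  rw [Finset.prod_congr rfl h1, ← Finset.prod_filter, filter_triple b a c ha hc hb hac]
  have hne1 : (a:ℕ) - 1 ∉ ({c - 1, b - 1} : Finset ℕ) := by
    simp only [Finset.mem_insert, Finset.mem_singleton]; omega
  have hne2 : (c:ℕ) - 1 ∉ ({b - 1} : Finset ℕ) := by
    simp only [Finset.mem_singleton]; omega
  rw [Finset.prod_insert hne1, Finset.prod_insert hne2, Finset.prod_singleton]
  rw [show b*M + (a-1) + 1 = b*M + a by omega, show b*M + (c-1) + 1 = b*M + c by omega,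
      show b*M + (b-1) + 1 = b*(M+1) by ring_nf; omega]
  ring

lemma prod_F (b a c : ℕ) (ha : 1 ≤ a) (hc : 1 ≤ c) (hb : a + c = b) (hac : a ≠ c) (M : ℕ) :
    (∏ n ∈ range (b*M), (if (n + 1) % b = 0 ∨ (n + 1) % b = a % b ∨ (n + 1 + a) % b = 0
        then (1 : PowerSeries ℤ) - X^(n+1) else 1))
    = (∏ k ∈ range M, (1 - X^(b*k+a))) * (∏ k ∈ range M, (1 - X^(b*k+c)))
      * (∏ k ∈ range M, (1 - X^(b*(k+1)))) := by
  induction M with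
  | zero => simp
  | succ M ih =>
      rw [show b*(M+1) = b*M + b by ring, Finset.prod_range_add, ih,
          Finset.prod_range_succ, Finset.prod_range_succ,
          Finset.prod_range_succ (fun k => (1:PowerSeries ℤ) - X^(b*(k+1)))]
      have : (∏ i ∈ range b, (if (b*M + i + 1) % b = 0 ∨ (b*M + i + 1) % b = a % b
          ∨ (b*M + i + 1 + a) % b = 0 then (1 : PowerSeries ℤ) - X^(b*M + i + 1) else 1))
          = (1 - X^(b*M+a)) * (1 - X^(b*M+c)) * (1 - X^(b*(M+1))) :=
        block_prod b a c ha hc hb hac M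
      rw [this]
      ring


/-! ### Specialization `X ↦ X^b` and per-term coefficient computation -/

noncomputable def phi (b : ℕ) : Polynomial ℤ →+* PowerSeries ℤ :=
  Polynomial.eval₂RingHom (Int.castRingHom (PowerSeries ℤ)) (X^b)

lemma phi_X (b : ℕ) : phi b Polynomial.X = X^b := Polynomial.eval₂_X _ _

lemma phi_gb (b n : ℕ) (j : ℤ) :
    phi b (gb Polynomial.X n j) = gb (X^b : PowerSeries ℤ) n j := by
  rw [gb_map (phi b) _ n j, phi_X]

lemma phi_Epoly (b M : ℕ) :
    phi b (Epoly M) = ∏ k ∈ range M, (1 - X^(b*(k+1))) := by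
  rw [Epoly, map_prod]
  refine Finset.prod_congr rfl fun r _ => ?_
  rw [map_sub, map_one, map_pow, phi_X, ← pow_mul]

lemma vlb (a c b : ℕ) (ha : 1 ≤ a) (hc : 1 ≤ c) (hb : a + c = b) (j : ℤ) :
    |j| ≤ (a:ℤ)*j + (b:ℤ)*(ee j : ℤ) := by
  have h2 := ee_two j
  have hee : (0:ℤ) ≤ (ee j : ℤ) := Int.natCast_nonneg _
  have ha' : (1:ℤ) ≤ (a:ℤ) := by exact_mod_cast ha
  have hc' : (1:ℤ) ≤ (c:ℤ) := by exact_mod_cast hc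
  have hb' : (b:ℤ) = (a:ℤ) + (c:ℤ) := by exact_mod_cast hb.symm
  rcases le_or_gt 0 j with h | h
  · rw [abs_of_nonneg h]
    nlinarith
  · rw [abs_of_neg h]
    have k1 : 0 ≤ (a:ℤ) * (j*(j+1)) :=
      mul_nonneg (by positivity) (by nlinarith)
    have k2 : (j*(j-1)) ≤ (c:ℤ)*(j*(j-1)) :=
      le_mul_of_one_le_left (by nlinarith) hc'
    nlinarith

lemma junk_bound (a c b N M : ℕ) (ha : 1 ≤ a) (hc : 1 ≤ c) (hb : a + c = b) (hM : M = N + 1)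
    (j : ℤ) (hj1 : -(M:ℤ) ≤ j) (hj2 : j ≤ (M:ℤ)) :
    N + a*M < a*(((M:ℤ)+j).toNat) + b*(ee j)
      + b*(min (((M:ℤ)+j).toNat) (2*M - ((M:ℤ)+j).toNat) + 1) := by
  have hv := vlb a c b ha hc hb j
  set p : ℕ := ((M:ℤ)+j).toNat with hp
  set μ : ℕ := min p (2*M - p) with hμ
  have hpz : (p:ℤ) = (M:ℤ) + j := by omega
  have habs : |j| = j ∨ |j| = -j := abs_choice j
  have habs0 : 0 ≤ |j| := abs_nonneg j
  have hμz : (M:ℤ) - |j| ≤ (μ:ℤ) := by rcases habs with h | h <;> omega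
  have hjM : |j| ≤ (M:ℤ) := by rcases habs with h | h <;> omega
  have hb1 : (1:ℤ) ≤ (b:ℤ) := by exact_mod_cast (by omega : 1 ≤ b)
  have hbμ : ((μ:ℤ)+1) ≤ (b:ℤ)*((μ:ℤ)+1) := le_mul_of_one_le_left (by positivity) hb1
  have hap : (a:ℤ)*(p:ℤ) + (b:ℤ)*(ee j : ℤ) = (a:ℤ)*(M:ℤ) + ((a:ℤ)*j + (b:ℤ)*(ee j:ℤ)) := by
    rw [hpz]; ring
  have hint : ((N + a*M : ℕ):ℤ) < ((a*p + b*(ee j) + b*(μ + 1) : ℕ):ℤ) := by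
    push_cast
    have hMN : (M:ℤ) = (N:ℤ) + 1 := by exact_mod_cast hM
    nlinarith [hv, hμz, hbμ, hap]
  exact_mod_cast hint

lemma coeff_term (a c b N M : ℕ) (ha : 1 ≤ a) (hc : 1 ≤ c) (hb : a + c = b) (hM : M = N + 1)
    (j : ℤ) (hj1 : -(M:ℤ) ≤ j) (hj2 : j ≤ (M:ℤ)) :
    coeff (N + a*M) ((∏ k ∈ range M, ((1:PowerSeries ℤ) - X^(b*(k+1))))
        * Tm (X^a : PowerSeries ℤ) (X^b) M j)
    = if a*(((M:ℤ)+j).toNat) + b*(ee j) = N + a*M then ((j.negOnePow : ℤ)) else 0 := by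
  obtain ⟨H, hH⟩ := eul_gb_one M ((M:ℤ)+j) (by omega) (by push_cast; omega)
  have hPS := congrArg (phi b) hH
  rw [map_mul, map_add, map_one, map_mul, map_pow, phi_X, phi_gb, phi_Epoly, ← pow_mul] at hPS
  have hx : (X^a : PowerSeries ℤ)^(((M:ℤ)+j).toNat) * (X^b : PowerSeries ℤ)^(ee j)
      = X^(a*(((M:ℤ)+j).toNat) + b*(ee j)) := by
    rw [← pow_mul, ← pow_mul, ← pow_add]
  have hre : (∏ k ∈ range M, ((1:PowerSeries ℤ) - X^(b*(k+1)))) * Tm (X^a : PowerSeries ℤ) (X^b) M j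
      = (((j.negOnePow:ℤ) : PowerSeries ℤ)) * (X^(a*(((M:ℤ)+j).toNat) + b*(ee j))
          * ((∏ k ∈ range M, ((1:PowerSeries ℤ) - X^(b*(k+1))))
            * gb (X^b : PowerSeries ℤ) (2*M) ((M:ℤ)+j))) := by
    rw [Tm, ← hx]; ring
  rw [hre, hPS, mul_add, mul_one]
  rw [show (X : PowerSeries ℤ)^(a*(((M:ℤ)+j).toNat) + b*(ee j))
        * (X^(b*(min (((M:ℤ)+j).toNat) (2*M - ((M:ℤ)+j).toNat) + 1)) * phi b H)
      = X^(a*(((M:ℤ)+j).toNat) + b*(ee j) + b*(min (((M:ℤ)+j).toNat) (2*M - ((M:ℤ)+j).toNat) + 1))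
        * phi b H by rw [← mul_assoc, ← pow_add]]
  rw [← zsmul_eq_mul, map_zsmul, map_add, coeff_X_pow_mul_of_lt
    (junk_bound a c b N M ha hc hb hM j hj1 hj2), add_zero, PowerSeries.coeff_X_pow]
  rcases eq_or_ne (a*(((M:ℤ)+j).toNat) + b*(ee j)) (N + a*M) with h | h
  · rw [if_pos h, if_pos h.symm]
    simp
  · rw [if_neg h, if_neg (Ne.symm h)]
    simp

lemma sum_Icc_neg {A : Type*} [AddCommMonoid A] (f : ℤ → A) (M : ℕ) :
    ∑ n ∈ Finset.Icc (-(M:ℤ)) (M:ℤ), f n = ∑ j ∈ Finset.Icc (-(M:ℤ)) (M:ℤ), f (-j) := by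
  have himg : Finset.image (fun n : ℤ => -n) (Finset.Icc (-(M:ℤ)) (M:ℤ))
      = Finset.Icc (-(M:ℤ)) (M:ℤ) := by
    ext x
    simp only [Finset.mem_image, Finset.mem_Icc]
    constructor
    · rintro ⟨y, hy, rfl⟩; omega
    · intro hx; exact ⟨-x, by omega, by omega⟩
  conv_lhs => rw [← himg]
  rw [Finset.sum_image (by intro x _ y _ h; have h' : -x = -y := h; omega)]

end JTP

open JTP Finset

/-- For every integer `t ≥ 2`,
`Σ_{n∈ℤ} (-1)^n q^{(2t-1)n/2 + 3(2t-1)²n²/2}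
  = ∏_{n ≥ 1} (1-q^n) · ∏_{n ≥ 1, n ≢ 0, ±(2t-1)(3t-2) (mod 3(2t-1)²)} 1/(1-q^n)`
as formal power series. -/
theorem theta_eq_euler_product_mul_character (t : ℕ) (ht : 2 ≤ t) :
    seriesSum (fun n => (n.negOnePow : ℤ))
        (fun n => (((2 * (t : ℤ) - 1) * n + 3 * (2 * (t : ℤ) - 1) ^ 2 * n ^ 2) / 2).toNat)
      = seriesProd (fun n => 1 - X ^ (n + 1)) *
          AG (3 * (2 * t - 1) ^ 2) ((2 * t - 1) * (3 * t - 2)) := by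
  obtain ⟨s, rfl⟩ : ∃ s, t = s + 2 := ⟨t - 2, by omega⟩
  clear ht
  simp only [show ((s+2:ℕ):ℤ) = (s:ℤ)+2 from by push_cast; ring,
    show (2*((s:ℤ)+2)-1) = 2*(s:ℤ)+3 from by ring]
  obtain ⟨a, ha_def⟩ : ∃ a, a = (2*s+3)*(3*s+4) := ⟨_, rfl⟩
  obtain ⟨c, hc_def⟩ : ∃ c, c = (2*s+3)*(3*s+5) := ⟨_, rfl⟩
  obtain ⟨b, hb_def⟩ : ∃ b, b = 3*(2*s+3)^2 := ⟨_, rfl⟩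
  have ha1 : 1 ≤ a := by
    have : 0 < (2*s+3)*(3*s+4) := by positivity
    omega
  have hc1 : 1 ≤ c := by
    have : 0 < (2*s+3)*(3*s+5) := by positivity
    omega
  have hb : a + c = b := by rw [ha_def, hc_def, hb_def]; ring
  have hac : a ≠ c := by
    have : (2*s+3)*(3*s+4) < (2*s+3)*(3*s+5) := by nlinarith
    omega
  rw [show 3*(2*(s+2)-1)^2 = b from by rw [hb_def, show 2*(s+2)-1 = 2*s+3 by omega],
      show (2*(s+2)-1)*(3*(s+2)-2) = a from by
        rw [ha_def, show 2*(s+2)-1 = 2*s+3 by omega, show 3*(s+2)-2 = 3*s+4 by omega]]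
  -- value of the theta exponent
  have hWn : ∀ j : ℤ, ((2*(s:ℤ)+3)*(-j) + 3*(2*(s:ℤ)+3)^2*(-j)^2)/2
      = (a:ℤ)*j + (b:ℤ)*(ee j : ℤ) := by
    intro j
    have h2 := ee_two j
    have haz : (a:ℤ) = (2*(s:ℤ)+3)*(3*(s:ℤ)+4) := by rw [ha_def]; push_cast; ring
    have hbz : (b:ℤ) = 3*(2*(s:ℤ)+3)^2 := by rw [hb_def]; push_cast; ring
    rw [haz, hbz]
    have hnum : (2*(s:ℤ)+3)*(-j) + 3*(2*(s:ℤ)+3)^2*(-j)^2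
        = 2*((2*(s:ℤ)+3)*(3*(s:ℤ)+4)*j + 3*(2*(s:ℤ)+3)^2*(ee j : ℤ)) := by
      linear_combination (-3*(2*(s:ℤ)+3)^2) * h2
    rw [hnum, Int.mul_ediv_cancel_left _ two_ne_zero]
  have hWn' : ∀ n : ℤ, ((2*(s:ℤ)+3)*n + 3*(2*(s:ℤ)+3)^2*n^2)/2
      = (a:ℤ)*(-n) + (b:ℤ)*(ee (-n) : ℤ) := by
    intro n
    have := hWn (-n)
    rw [neg_neg] at this
    exact this
  -- the RHS as a single `seriesProd`
  have hconst : ∀ n : ℕ, constantCoeff ((1 - X^(n+1)) : PowerSeries ℤ) = 1 := by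
    intro n
    rw [map_sub, map_one, map_pow, constantCoeff_X, zero_pow (Nat.succ_ne_zero n), sub_zero]
  have hinv : ∀ n : ℕ, ((1 - X^(n+1)) : PowerSeries ℤ)
      * PowerSeries.invOfUnit (1 - X^(n+1)) 1 = 1 :=
    fun n => PowerSeries.mul_invOfUnit _ 1 (by rw [hconst n]; rfl)
  have hnice1 : Nice (fun n => (1:PowerSeries ℤ) - X^(n+1)) := fun n => ⟨-1, by ring⟩
  have hnice2 : Nice (fun n => if (n + 1) % b = 0 ∨ (n + 1) % b = a % b ∨ (n + 1 + a) % b = 0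
      then (1:PowerSeries ℤ) else PowerSeries.invOfUnit (1 - X^(n+1)) 1) := by
    intro n
    by_cases h : (n + 1) % b = 0 ∨ (n + 1) % b = a % b ∨ (n + 1 + a) % b = 0
    · exact ⟨0, by simp only [if_pos h]; ring⟩
    · refine ⟨PowerSeries.invOfUnit (1 - X^(n+1)) 1, ?_⟩
      simp only [if_neg h]
      linear_combination (hinv n)
  have hFR : seriesProd (fun n => 1 - X^(n+1)) * AG b a
      = seriesProd (fun n => if (n + 1) % b = 0 ∨ (n + 1) % b = a % b ∨ (n + 1 + a) % b = 0
          then (1:PowerSeries ℤ) - X^(n+1) else 1) := by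
    rw [AG, seriesProd_mul hnice1 hnice2]
    refine congrArg seriesProd (funext fun n => ?_)
    show ((1:PowerSeries ℤ) - X^(n+1)) * (if (n + 1) % b = 0 ∨ (n + 1) % b = a % b
        ∨ (n + 1 + a) % b = 0 then (1:PowerSeries ℤ) else PowerSeries.invOfUnit (1 - X^(n+1)) 1)
      = _
    by_cases h : (n + 1) % b = 0 ∨ (n + 1) % b = a % b ∨ (n + 1 + a) % b = 0
    · simp only [if_pos h, mul_one]
    · simp only [if_neg h]
      exact hinv n
  rw [hFR]
  have hniceF : Nice (fun n => if (n + 1) % b = 0 ∨ (n + 1) % b = a % b ∨ (n + 1 + a) % b = 0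
      then (1:PowerSeries ℤ) - X^(n+1) else 1) := by
    intro n
    by_cases h : (n + 1) % b = 0 ∨ (n + 1) % b = a % b ∨ (n + 1 + a) % b = 0
    · exact ⟨-1, by simp only [if_pos h]; ring⟩
    · exact ⟨0, by simp only [if_neg h]; ring⟩
  ext N
  obtain ⟨M, hM⟩ : ∃ M, M = N + 1 := ⟨_, rfl⟩
  have hbM : N < b*M := by
    have h1 : 1*M ≤ b*M := Nat.mul_le_mul_right M (by omega)
    omega
  rw [coeff_seriesProd hniceF N (b*M) hbM, prod_F b a c ha1 hc1 hb hac M]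
  -- finite Jacobi triple product, specialized
  have hfj := fjtp (X^a : PowerSeries ℤ) (X^b) M
  have hPa : (∏ k ∈ range M, ((1:PowerSeries ℤ) - X^a * (X^b)^k))
      = ∏ k ∈ range M, ((1:PowerSeries ℤ) - X^(b*k+a)) := by
    refine Finset.prod_congr rfl fun k _ => ?_
    rw [← pow_mul, ← pow_add, add_comm a (b*k)]
  have hPc : (∏ k ∈ range M, ((X^a : PowerSeries ℤ) - (X^b)^(k+1)))
      = X^(a*M) * ∏ k ∈ range M, ((1:PowerSeries ℤ) - X^(b*k+c)) := by
    have hfac : ∀ k ∈ range M, ((X^a : PowerSeries ℤ) - (X^b)^(k+1))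
        = X^a * (1 - X^(b*k+c)) := by
      intro k _
      rw [mul_sub, mul_one, ← pow_add, ← pow_mul]
      rw [show a + (b*k+c) = b*(k+1) from by
        have : b*(k+1) = b*k + b := by ring
        omega]
    rw [Finset.prod_congr rfl hfac, Finset.prod_mul_distrib, Finset.prod_const,
      Finset.card_range, ← pow_mul]
  rw [hPa, hPc] at hfj
  have hmain : coeff N ((∏ k ∈ range M, ((1:PowerSeries ℤ) - X^(b*k+a)))
        * (∏ k ∈ range M, ((1:PowerSeries ℤ) - X^(b*k+c)))
        * (∏ k ∈ range M, ((1:PowerSeries ℤ) - X^(b*(k+1)))))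
      = ∑ j ∈ Finset.Icc (-(M:ℤ)) (M:ℤ), coeff (N + a*M)
          ((∏ k ∈ range M, ((1:PowerSeries ℤ) - X^(b*(k+1))))
            * Tm (X^a : PowerSeries ℤ) (X^b) M j) := by
    calc coeff N ((∏ k ∈ range M, ((1:PowerSeries ℤ) - X^(b*k+a)))
          * (∏ k ∈ range M, ((1:PowerSeries ℤ) - X^(b*k+c)))
          * (∏ k ∈ range M, ((1:PowerSeries ℤ) - X^(b*(k+1)))))
        = coeff (N + a*M) (X^(a*M) * ((∏ k ∈ range M, ((1:PowerSeries ℤ) - X^(b*k+a)))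
          * (∏ k ∈ range M, ((1:PowerSeries ℤ) - X^(b*k+c)))
          * (∏ k ∈ range M, ((1:PowerSeries ℤ) - X^(b*(k+1)))))) :=
          (PowerSeries.coeff_X_pow_mul _ _ _).symm
      _ = coeff (N + a*M) ((∏ k ∈ range M, ((1:PowerSeries ℤ) - X^(b*(k+1))))
          * ((∏ k ∈ range M, ((1:PowerSeries ℤ) - X^(b*k+a)))
            * (X^(a*M) * ∏ k ∈ range M, ((1:PowerSeries ℤ) - X^(b*k+c))))) := by
          congr 1
          ring
      _ = coeff (N + a*M) ((∏ k ∈ range M, ((1:PowerSeries ℤ) - X^(b*(k+1))))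
          * (∑ j ∈ Finset.Icc (-(M:ℤ)) (M:ℤ), Tm (X^a : PowerSeries ℤ) (X^b) M j)) := by
          rw [hfj]
      _ = _ := by rw [Finset.mul_sum, map_sum]
  rw [hmain,
    Finset.sum_congr rfl (fun j hj => by
      have hj' := Finset.mem_Icc.mp hj
      exact coeff_term a c b N M ha1 hc1 hb hM j hj'.1 hj'.2)]
  -- left-hand side: the theta sum
  rw [seriesSum, PowerSeries.coeff_mk]
  have hsupp : ∀ n : ℤ, n ∉ Finset.Icc (-(M:ℤ)) (M:ℤ) →
      (if (((2*(s:ℤ)+3)*n + 3*(2*(s:ℤ)+3)^2*n^2)/2).toNat = N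
        then ((n.negOnePow : ℤ)) else 0) = 0 := by
    intro n hn
    rw [Finset.mem_Icc] at hn
    have hv := vlb a c b ha1 hc1 hb (-n)
    rw [abs_neg] at hv
    have habs : |n| = n ∨ |n| = -n := abs_choice n
    have habs0 : (0:ℤ) ≤ |n| := abs_nonneg n
    have hne : ¬((((2*(s:ℤ)+3)*n + 3*(2*(s:ℤ)+3)^2*n^2)/2).toNat = N) := by
      rw [hWn' n]
      rcases habs with h | h <;> omega
    rw [if_neg hne]
  rw [tsum_eq_sum hsupp]
  refine (sum_Icc_neg _ M).trans (Finset.sum_congr rfl fun j hj => ?_)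
  have hj' := Finset.mem_Icc.mp hj
  have hge : (0:ℤ) ≤ (a:ℤ)*j + (b:ℤ)*(ee j : ℤ) :=
    le_trans (abs_nonneg j) (vlb a c b ha1 hc1 hb j)
  have hcast : ((a*(((M:ℤ)+j).toNat) + b*(ee j) : ℕ) : ℤ)
      = (a:ℤ)*(M:ℤ) + ((a:ℤ)*j + (b:ℤ)*(ee j:ℤ)) := by
    have hpz : ((((M:ℤ)+j).toNat : ℕ) : ℤ) = (M:ℤ)+j := by omega
    push_cast
    rw [hpz]
    ring
  have key : (a*(((M:ℤ)+j).toNat) + b*(ee j) = N + a*M)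
      ↔ ((a:ℤ)*j + (b:ℤ)*(ee j:ℤ) = (N:ℤ)) := by
    rw [← Nat.cast_inj (R := ℤ), hcast]
    push_cast
    constructor <;> intro h <;> linarith
  have hcondiff : ((((2*(s:ℤ)+3)*(-j) + 3*(2*(s:ℤ)+3)^2*(-j)^2)/2).toNat = N)
      ↔ (a*(((M:ℤ)+j).toNat) + b*(ee j) = N + a*M) := by
    rw [hWn j, key]
    omega
  rw [if_congr hcondiff rfl rfl, Int.negOnePow_neg]
end
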